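/- arXiv:2407.03643 — 3 statements merged into one kernel-verified Lean document; each statement's English description precedes it below -/
import Mathlib

section
/- (Lemma in Section 3.2) For every N ≥ 1, the matrix L_N is symmetric positive definite; in particular det L_N > 0 for every N ≥ 1. -/
noncomputable section

open Real Filter MeasureTheory Metric

namespace SD

/-- `c_m = (tanh((m + n/2)(ξ₁ − ξ₂)))^(−1/2)` -/
def cseq (n : ℕ) (ξ₁ ξ₂ : ℝ) (m : ℕ) : ℝ :=
  (Real.tanh (((m : ℝ) + (n : ℝ) / 2) * (ξ₁ - ξ₂))) ^ (-(1 : ℝ) / 2)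

/-- `d_m = (n + 2m)·c_m²·cosh ξ₂ − n·sinh ξ₂` -/
def dseq (n : ℕ) (ξ₁ ξ₂ : ℝ) (m : ℕ) : ℝ :=
  ((n : ℝ) + 2 * (m : ℝ)) * (cseq n ξ₁ ξ₂ m) ^ 2 * Real.cosh ξ₂ - (n : ℝ) * Real.sinh ξ₂

/-- `w_m = √((m + n − 1)·m)` -/
def wseq (n : ℕ) (m : ℕ) : ℝ := Real.sqrt (((m : ℝ) + (n : ℝ) - 1) * (m : ℝ))

/-- The `N×N` finite-section matrix `L_N`. -/
def secMat (n : ℕ) (ξ₁ ξ₂ α : ℝ) (N : ℕ) : Matrix (Fin N) (Fin N) ℝ :=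
  Matrix.of fun i j =>
    if (i : ℕ) = (j : ℕ) then dseq n ξ₁ ξ₂ i / (2 * α)
    else if (i : ℕ) + 1 = (j : ℕ) ∨ (j : ℕ) + 1 = (i : ℕ) then
      -(wseq n (max (i : ℕ) (j : ℕ)) * cseq n ξ₁ ξ₂ (min (i : ℕ) (j : ℕ)) *
          cseq n ξ₁ ξ₂ (max (i : ℕ) (j : ℕ))) / (2 * α)
    else 0

/-- `σ_{1,N}`, the smallest eigenvalue of `L_N`. -/
def sigma1 (n : ℕ) (ξ₁ ξ₂ α : ℝ) (N : ℕ) : ℝ :=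
  sInf {σ : ℝ | ∃ v : Fin N → ℝ, v ≠ 0 ∧ (secMat n ξ₁ ξ₂ α N).mulVec v = σ • v}

/-- The ambient Euclidean space `ℝ^{n+2}`. -/
abbrev Pt (n : ℕ) := EuclideanSpace ℝ (Fin (n + 2))

/-- The first standard basis vector `e₁`. -/
def e1 (n : ℕ) : Pt n := EuclideanSpace.single 0 1

/-- Center `α·coth(ξ)·e₁` of the boundary sphere `{ξ(x) = ξ}`. -/
def ctr (n : ℕ) (α ξ : ℝ) : Pt n := (α * Real.cosh ξ / Real.sinh ξ) • e1 n

/-- Radius `α / sinh ξ`. -/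
def rad (α ξ : ℝ) : ℝ := α / Real.sinh ξ

/-- The open ball with center `α·coth(ξ)·e₁` and radius `α/sinh ξ`. -/
def ballB (n : ℕ) (α ξ : ℝ) : Set (Pt n) := Metric.ball (ctr n α ξ) (rad α ξ)

/-- The eccentric spherical shell `Ω = B₂ \ closure B₁`. -/
def shell (n : ℕ) (ξ₁ ξ₂ α : ℝ) : Set (Pt n) := ballB n α ξ₂ \ closure (ballB n α ξ₁)

/-- `Γ_D = ∂B₁`. -/
def gammaD (n : ℕ) (α ξ₁ : ℝ) : Set (Pt n) := frontier (ballB n α ξ₁)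

/-- `Γ_S = ∂B₂`. -/
def gammaS (n : ℕ) (α ξ₂ : ℝ) : Set (Pt n) := frontier (ballB n α ξ₂)

/-- The `(n+1)`-dimensional Hausdorff measure `μ`. -/
def surfMeas (n : ℕ) : Measure (Pt n) := μH[(n : ℝ) + 1]

/-- Dirichlet energy `∫_Ω ‖∇v‖²`. -/
def energy (n : ℕ) (ξ₁ ξ₂ α : ℝ) (v : Pt n → ℝ) : ℝ :=
  ∫ x in shell n ξ₁ ξ₂ α, ‖gradient v x‖ ^ 2

/-- `∫_{Γ_S} v² dμ`. -/
def bdryNormSq (n : ℕ) (ξ₂ α : ℝ) (v : Pt n → ℝ) : ℝ :=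
  ∫ x in gammaS n α ξ₂, (v x) ^ 2 ∂(surfMeas n)

/-- `v` is of class `C^k` on a neighborhood of the closure of `Ω`. -/
def SmoothNhd (n : ℕ) (ξ₁ ξ₂ α : ℝ) (k : ℕ∞) (v : Pt n → ℝ) : Prop :=
  ∃ U : Set (Pt n), IsOpen U ∧ closure (shell n ξ₁ ξ₂ α) ⊆ U ∧ ContDiffOn ℝ k v U

/-- Admissible trial function for the first Steklov–Dirichlet eigenvalue. -/
def Admissible (n : ℕ) (ξ₁ ξ₂ α : ℝ) (v : Pt n → ℝ) : Prop :=
  SmoothNhd n ξ₁ ξ₂ α 1 v ∧ (∀ x ∈ gammaD n α ξ₁, v x = 0) ∧ 0 < bdryNormSq n ξ₂ α v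

/-- Rayleigh quotient `R(v)`. -/
def rayleigh (n : ℕ) (ξ₁ ξ₂ α : ℝ) (v : Pt n → ℝ) : ℝ :=
  energy n ξ₁ ξ₂ α v / bdryNormSq n ξ₂ α v

/-- The first Steklov–Dirichlet eigenvalue `σ₁` of `Ω`. -/
def steklov1 (n : ℕ) (ξ₁ ξ₂ α : ℝ) : ℝ :=
  sInf {r : ℝ | ∃ v : Pt n → ℝ, Admissible n ξ₁ ξ₂ α v ∧ r = rayleigh n ξ₁ ξ₂ α v}

/-- Auxiliary pair `(G_m^{(n/2)}, G_{m+1}^{(n/2)})` for the Gegenbauer recursion. -/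
def gegenAux (n : ℕ) : ℕ → ℝ → ℝ × ℝ
  | 0, s => (1, (n : ℝ) * s)
  | m + 1, s =>
      ((gegenAux n m s).2,
        ((2 * ((m : ℝ) + 2) + (n : ℝ) - 2) * s * (gegenAux n m s).2
          - (((m : ℝ) + 2) + (n : ℝ) - 2) * (gegenAux n m s).1) / ((m : ℝ) + 2))

/-- The Gegenbauer polynomial `G_m^{(n/2)}`. -/
def gegen (n m : ℕ) (s : ℝ) : ℝ := (gegenAux n m s).1

/-- `r₊(x) = ‖x − α·e₁‖`. -/
def rP (n : ℕ) (α : ℝ) (x : Pt n) : ℝ := ‖x - α • e1 n‖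

/-- `r₋(x) = ‖x + α·e₁‖`. -/
def rM (n : ℕ) (α : ℝ) (x : Pt n) : ℝ := ‖x + α • e1 n‖

/-- Bispherical coordinate `ξ(x) = ln(r₋/r₊)`. -/
def xiC (n : ℕ) (α : ℝ) (x : Pt n) : ℝ := Real.log (rM n α x / rP n α x)

/-- Bispherical coordinate `cos θ(x)`. -/
def cosT (n : ℕ) (α : ℝ) (x : Pt n) : ℝ :=
  (rP n α x ^ 2 + rM n α x ^ 2 - 4 * α ^ 2) / (2 * rP n α x * rM n α x)

/-- The basis harmonic function `u_k`. -/
def uBase (n : ℕ) (ξ₁ α : ℝ) (k : ℕ) (x : Pt n) : ℝ :=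
  (Real.cosh (xiC n α x) - cosT n α x) ^ ((n : ℝ) / 2) *
    (Real.exp (((k : ℝ) + (n : ℝ) / 2) * (2 * ξ₁ - xiC n α x))
      - Real.exp (((k : ℝ) + (n : ℝ) / 2) * xiC n α x)) *
    gegen n k (cosT n α x)

/-- Boundary mode `g̃_k` on `Γ_S`. -/
def gtilde (n : ℕ) (ξ₂ α : ℝ) (k : ℕ) (x : Pt n) : ℝ :=
  (Real.cosh ξ₂ - cosT n α x) ^ ((n : ℝ) / 2) * gegen n k (cosT n α x)

/-- Outward unit normal of `B₂` at `x ∈ Γ_S`. -/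
def nuS (n : ℕ) (ξ₂ α : ℝ) (x : Pt n) : Pt n := (rad α ξ₂)⁻¹ • (x - ctr n α ξ₂)

/-- Normal derivative `∂v/∂n(x)` on `Γ_S`. -/
def normalDeriv (n : ℕ) (ξ₂ α : ℝ) (v : Pt n → ℝ) (x : Pt n) : ℝ :=
  fderiv ℝ v x (nuS n ξ₂ α x)

/-- `E_k = e^{(k+n/2)(2ξ₁−ξ₂)} − e^{(k+n/2)ξ₂}`. -/
def modeCoeff (n : ℕ) (ξ₁ ξ₂ : ℝ) (k : ℕ) : ℝ :=
  Real.exp (((k : ℝ) + (n : ℝ) / 2) * (2 * ξ₁ - ξ₂))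
    - Real.exp (((k : ℝ) + (n : ℝ) / 2) * ξ₂)

/-- The truncated eigenfunction `u_{1,m}` built from the coefficients `C̃`. -/
def trunc (n : ℕ) (ξ₁ ξ₂ α : ℝ) (m : ℕ) (C : Fin m → ℝ) (x : Pt n) : ℝ :=
  ∑ k : Fin m, C k * (modeCoeff n ξ₁ ξ₂ (k : ℕ))⁻¹ * uBase n ξ₁ α (k : ℕ) x

/-- `C̃` is an eigenvector of `L_m` for the smallest eigenvalue `σ_{1,m}`. -/
def IsFirstEigvec (n : ℕ) (ξ₁ ξ₂ α : ℝ) (m : ℕ) (C : Fin m → ℝ) : Prop :=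
  C ≠ 0 ∧ (secMat n ξ₁ ξ₂ α m).mulVec C = sigma1 n ξ₁ ξ₂ α m • C

/-- Steklov defect `f_m = ∂u_{1,m}/∂n − σ_{1,m}·u_{1,m}` on `Γ_S`. -/
def defect (n : ℕ) (ξ₁ ξ₂ α : ℝ) (m : ℕ) (C : Fin m → ℝ) (x : Pt n) : ℝ :=
  normalDeriv n ξ₂ α (trunc n ξ₁ ξ₂ α m C) x - sigma1 n ξ₁ ξ₂ α m * trunc n ξ₁ ξ₂ α m C x

/-- Pointwise Laplacian `Δf(x) = Σ_i ∂²f/∂x_i²`. -/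
def lap (n : ℕ) (f : Pt n → ℝ) (x : Pt n) : ℝ :=
  ∑ i : Fin (n + 2),
    fderiv ℝ (fun y => fderiv ℝ f y (EuclideanSpace.single i 1)) x (EuclideanSpace.single i 1)

end SD

open Matrix

section SecMatAux

open SD

/-- Auxiliary coefficient `A_k = c_k²·(n+k)·e^{-ξ₂}`. -/
def sdA (n : ℕ) (ξ₁ ξ₂ : ℝ) (k : ℕ) : ℝ :=
  (cseq n ξ₁ ξ₂ k) ^ 2 * ((n : ℝ) + k) * Real.exp (-ξ₂)

/-- Auxiliary coefficient `B_k = c_k²·k·e^{ξ₂}`. -/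
def sdB (n : ℕ) (ξ₁ ξ₂ : ℝ) (k : ℕ) : ℝ :=
  (cseq n ξ₁ ξ₂ k) ^ 2 * (k : ℝ) * Real.exp ξ₂

/-- Auxiliary coefficient `γ_k = n·sinh ξ₂·(c_k² − 1)`. -/
def sdG (n : ℕ) (ξ₁ ξ₂ : ℝ) (k : ℕ) : ℝ :=
  (n : ℝ) * Real.sinh ξ₂ * ((cseq n ξ₁ ξ₂ k) ^ 2 - 1)

lemma sd_tanh_facts {n : ℕ} {ξ₁ ξ₂ : ℝ} (hn : 1 ≤ n) (hξ : ξ₂ < ξ₁) (k : ℕ) :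
    0 < Real.tanh (((k : ℝ) + (n : ℝ) / 2) * (ξ₁ - ξ₂)) ∧
      Real.tanh (((k : ℝ) + (n : ℝ) / 2) * (ξ₁ - ξ₂)) < 1 := by
  have hn' : (1 : ℝ) ≤ (n : ℝ) := by exact_mod_cast hn
  have hk : (0 : ℝ) ≤ (k : ℝ) := Nat.cast_nonneg k
  have hd : (0 : ℝ) < ξ₁ - ξ₂ := sub_pos.2 hξ
  have harg : 0 < ((k : ℝ) + (n : ℝ) / 2) * (ξ₁ - ξ₂) := by nlinarith
  refine ⟨?_, ?_⟩
  · rw [Real.tanh_eq_sinh_div_cosh]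
    exact div_pos (by rwa [Real.sinh_pos_iff]) (Real.cosh_pos _)
  · rw [Real.tanh_eq_sinh_div_cosh, div_lt_one (Real.cosh_pos _)]
    exact Real.sinh_lt_cosh _

lemma sd_cseq_pos {n : ℕ} {ξ₁ ξ₂ : ℝ} (hn : 1 ≤ n) (hξ : ξ₂ < ξ₁) (k : ℕ) :
    0 < cseq n ξ₁ ξ₂ k :=
  Real.rpow_pos_of_pos (sd_tanh_facts hn hξ k).1 _

lemma sd_cseq_sq {n : ℕ} {ξ₁ ξ₂ : ℝ} (hn : 1 ≤ n) (hξ : ξ₂ < ξ₁) (k : ℕ) :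
    (cseq n ξ₁ ξ₂ k) ^ 2 = (Real.tanh (((k : ℝ) + (n : ℝ) / 2) * (ξ₁ - ξ₂)))⁻¹ := by
  obtain ⟨h0, h1⟩ := sd_tanh_facts hn hξ k
  rw [cseq, ← Real.rpow_natCast (_ ^ _) 2, ← Real.rpow_mul h0.le,
    show ((-(1 : ℝ) / 2) * ((2 : ℕ) : ℝ)) = -1 by norm_num, Real.rpow_neg_one]

lemma sd_one_lt_cseq_sq {n : ℕ} {ξ₁ ξ₂ : ℝ} (hn : 1 ≤ n) (hξ : ξ₂ < ξ₁) (k : ℕ) :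
    1 < (cseq n ξ₁ ξ₂ k) ^ 2 := by
  obtain ⟨h0, h1⟩ := sd_tanh_facts hn hξ k
  rw [sd_cseq_sq hn hξ k]
  exact (one_lt_inv_iff₀).2 ⟨h0, h1⟩

lemma sd_dseq_split {n : ℕ} {ξ₁ ξ₂ : ℝ} (k : ℕ) :
    dseq n ξ₁ ξ₂ k = sdA n ξ₁ ξ₂ k + sdB n ξ₁ ξ₂ k + sdG n ξ₁ ξ₂ k := by
  unfold dseq sdA sdB sdG
  rw [Real.cosh_eq, Real.sinh_eq]
  ring

lemma sd_wsq (n k : ℕ) (hn : 1 ≤ n) :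
    (wseq n (k + 1)) ^ 2 = ((k : ℝ) + n) * ((k : ℝ) + 1) := by
  have hn' : (1 : ℝ) ≤ (n : ℝ) := by exact_mod_cast hn
  have hk : (0 : ℝ) ≤ (k : ℝ) := Nat.cast_nonneg k
  rw [wseq, sq_sqrt (by push_cast; nlinarith)]
  push_cast
  ring

/-- The key cross-term bound `(w_{k+1} c_k c_{k+1})² = A_k · B_{k+1}`. -/
lemma sd_cross_sq {n : ℕ} {ξ₁ ξ₂ : ℝ} (hn : 1 ≤ n) (hξ : ξ₂ < ξ₁) (k : ℕ) :
    (wseq n (k + 1) * cseq n ξ₁ ξ₂ k * cseq n ξ₁ ξ₂ (k + 1)) ^ 2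
      = sdA n ξ₁ ξ₂ k * sdB n ξ₁ ξ₂ (k + 1) := by
  have hw := sd_wsq n k hn
  unfold sdA sdB
  rw [mul_pow, mul_pow, hw, Real.exp_neg]
  have he : Real.exp ξ₂ ≠ 0 := Real.exp_ne_zero _
  field_simp
  push_cast
  ring

/-- Weighted AM–GM: if `b ≥ 0`, `b² = A·B`, `A, B ≥ 0` then `2·b·u·v ≤ A·u² + B·v²`. -/
lemma sd_amgm {b A B u v : ℝ} (hA : 0 ≤ A) (hB : 0 ≤ B) (hb : 0 ≤ b)
    (h : b ^ 2 = A * B) : 2 * b * u * v ≤ A * u ^ 2 + B * v ^ 2 := by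
  rcases eq_or_lt_of_le hA with hA0 | hA0
  · have hb0 : b = 0 := by nlinarith
    rw [hb0]
    nlinarith [sq_nonneg u, sq_nonneg v]
  · nlinarith [sq_nonneg (A * u - b * v), sq_nonneg u, sq_nonneg v]

end SecMatAux

section SecMatAux2

open SD

/-- Division-free diagonal piece. -/
def sdD2 (n : ℕ) (ξ₁ ξ₂ : ℝ) (y : ℕ → ℝ) (i j : ℕ) : ℝ :=
  if i = j then dseq n ξ₁ ξ₂ i * y i ^ 2 else 0

/-- Division-free upper off-diagonal bound piece. -/
def sdU2 (n : ℕ) (ξ₁ ξ₂ : ℝ) (y : ℕ → ℝ) (i j : ℕ) : ℝ :=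
  if i + 1 = j then -((sdA n ξ₁ ξ₂ i * y i ^ 2 + sdB n ξ₁ ξ₂ j * y j ^ 2) / 2) else 0

/-- Division-free pointwise lower bound for the quadratic form. -/
def sdP2 (n : ℕ) (ξ₁ ξ₂ : ℝ) (y : ℕ → ℝ) (i j : ℕ) : ℝ :=
  sdD2 n ξ₁ ξ₂ y i j + (sdU2 n ξ₁ ξ₂ y i j + sdU2 n ξ₁ ξ₂ y j i)

/-- Division-free quadratic form summand (entries of `2α·L`). -/
def sdQ2 (n : ℕ) (ξ₁ ξ₂ : ℝ) (y : ℕ → ℝ) (i j : ℕ) : ℝ :=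
  y i * ((if i = j then dseq n ξ₁ ξ₂ i
    else if i + 1 = j ∨ j + 1 = i then
      -(wseq n (max i j) * cseq n ξ₁ ξ₂ (min i j) * cseq n ξ₁ ξ₂ (max i j))
    else 0) * y j)

lemma sd_termwise {n : ℕ} {ξ₁ ξ₂ : ℝ} (hn : 1 ≤ n) (hξ : ξ₂ < ξ₁) (y : ℕ → ℝ) (i j : ℕ) :
    sdP2 n ξ₁ ξ₂ y i j ≤ sdQ2 n ξ₁ ξ₂ y i j := by
  have hAnn : ∀ k, 0 ≤ sdA n ξ₁ ξ₂ k := fun k => by unfold sdA; positivity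
  have hBnn : ∀ k, 0 ≤ sdB n ξ₁ ξ₂ k := fun k => by unfold sdB; positivity
  unfold sdP2 sdD2 sdU2 sdQ2
  by_cases h1 : i = j
  · subst h1
    rw [if_pos rfl, if_pos rfl, if_neg (show ¬i + 1 = i by omega)]
    exact le_of_eq (by ring)
  · by_cases h2 : i + 1 = j
    · subst h2
      have h3 : ¬(i + 1) + 1 = i := by omega
      have hor : i + 1 = i + 1 ∨ (i + 1) + 1 = i := Or.inl rfl
      have hmax : max i (i + 1) = i + 1 := by omega
      have hmin : min i (i + 1) = i := by omega
      rw [if_neg h1, if_neg h1, if_pos rfl, if_neg h3, if_pos hor, hmax, hmin]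
      have hb : 0 ≤ wseq n (i + 1) * cseq n ξ₁ ξ₂ i * cseq n ξ₁ ξ₂ (i + 1) :=
        mul_nonneg (mul_nonneg (Real.sqrt_nonneg _) (sd_cseq_pos hn hξ i).le)
          (sd_cseq_pos hn hξ (i + 1)).le
      have hkey := sd_amgm (u := y i) (v := y (i + 1)) (hAnn i) (hBnn (i + 1)) hb
        (sd_cross_sq hn hξ i)
      nlinarith [hkey]
    · by_cases h3 : j + 1 = i
      · subst h3
        have h1' : ¬(j + 1) = j := by omega
        have h2' : ¬(j + 1) + 1 = j := by omega
        have hor : (j + 1) + 1 = j ∨ j + 1 = j + 1 := Or.inr rfl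
        have hmax : max (j + 1) j = j + 1 := by omega
        have hmin : min (j + 1) j = j := by omega
        rw [if_neg h1, if_neg h1, if_neg h2', if_pos rfl, if_pos hor, hmax, hmin]
        have hb : 0 ≤ wseq n (j + 1) * cseq n ξ₁ ξ₂ j * cseq n ξ₁ ξ₂ (j + 1) :=
          mul_nonneg (mul_nonneg (Real.sqrt_nonneg _) (sd_cseq_pos hn hξ j).le)
            (sd_cseq_pos hn hξ (j + 1)).le
        have hkey := sd_amgm (u := y j) (v := y (j + 1)) (hAnn j) (hBnn (j + 1)) hb
          (sd_cross_sq hn hξ j)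
        nlinarith [hkey]
      · have hor : ¬(i + 1 = j ∨ j + 1 = i) := fun h => h.elim h2 h3
        rw [if_neg h1, if_neg h1, if_neg h2, if_neg h3, if_neg hor]
        simp

end SecMatAux2

open SD in
/-- Section 3.2 Lemma: `L_N` is symmetric positive definite; in particular `det L_N > 0`. -/
theorem secMat_posDef
    (n : ℕ) (hn : 1 ≤ n) (ξ₁ ξ₂ α : ℝ) (hξ : ξ₂ < ξ₁) (hξ₂ : 0 < ξ₂) (hα : 0 < α) :
    ∀ N : ℕ, 1 ≤ N →
      (secMat n ξ₁ ξ₂ α N).PosDef ∧ 0 < (secMat n ξ₁ ξ₂ α N).det := by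
  have hα2 : (0 : ℝ) < 2 * α := by linarith
  have hAnn : ∀ k, 0 ≤ sdA n ξ₁ ξ₂ k := fun k => by unfold sdA; positivity
  have hBnn : ∀ k, 0 ≤ sdB n ξ₁ ξ₂ k := fun k => by unfold sdB; positivity
  have hGpos : ∀ k, 0 < sdG n ξ₁ ξ₂ k := by
    intro k
    have h1 := sd_one_lt_cseq_sq hn hξ k
    have hs : 0 < Real.sinh ξ₂ := by rwa [Real.sinh_pos_iff]
    have hn' : (1 : ℝ) ≤ (n : ℝ) := by exact_mod_cast hn
    unfold sdG
    refine mul_pos (mul_pos ?_ hs) (sub_pos.2 h1)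
    linarith
  intro N hN
  have hherm : (secMat n ξ₁ ξ₂ α N).IsHermitian := by
    rw [Matrix.IsHermitian]
    ext i j
    simp only [Matrix.conjTranspose_apply, secMat, Matrix.of_apply, star_trivial]
    by_cases h : (j : ℕ) = (i : ℕ)
    · rw [if_pos h, if_pos h.symm, h]
    · rw [if_neg h, if_neg (Ne.symm h)]
      by_cases h2 : (j : ℕ) + 1 = (i : ℕ) ∨ (i : ℕ) + 1 = (j : ℕ)
      · rw [if_pos h2, if_pos (Or.symm h2), Nat.max_comm, Nat.min_comm]
      · rw [if_neg h2, if_neg (mt Or.symm h2)]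
  have hpd : (secMat n ξ₁ ξ₂ α N).PosDef := by
    refine Matrix.posDef_iff_dotProduct_mulVec.mpr ⟨hherm, fun x hx => ?_⟩
    have hstar : star x = x := funext fun i => star_trivial _
    rw [hstar]
    set y : ℕ → ℝ := fun k => if h : k < N then x ⟨k, h⟩ else 0 with hy_def
    have hyx : ∀ i : Fin N, y (i : ℕ) = x i := fun i => dif_pos i.isLt
    have hyN : y N = 0 := dif_neg (lt_irrefl N)
    have hq : (2 * α) * (x ⬝ᵥ (secMat n ξ₁ ξ₂ α N) *ᵥ x)
        = ∑ i ∈ Finset.range N, ∑ j ∈ Finset.range N, sdQ2 n ξ₁ ξ₂ y i j := by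
      simp only [dotProduct, Matrix.mulVec, Finset.mul_sum]
      rw [← Fin.sum_univ_eq_sum_range (fun i => ∑ j ∈ Finset.range N, sdQ2 n ξ₁ ξ₂ y i j) N]
      refine Finset.sum_congr rfl fun i _ => ?_
      rw [← Fin.sum_univ_eq_sum_range (fun j => sdQ2 n ξ₁ ξ₂ y (i : ℕ) j) N]
      refine Finset.sum_congr rfl fun j _ => ?_
      simp only [sdQ2, secMat, Matrix.of_apply, hyx]
      split_ifs with hc1 hc2 <;> field_simp <;> ring
    have hPQ : (∑ i ∈ Finset.range N, ∑ j ∈ Finset.range N, sdP2 n ξ₁ ξ₂ y i j)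
        ≤ ∑ i ∈ Finset.range N, ∑ j ∈ Finset.range N, sdQ2 n ξ₁ ξ₂ y i j :=
      Finset.sum_le_sum fun i _ => Finset.sum_le_sum fun j _ => sd_termwise hn hξ y i j
    have hPsum : (∑ i ∈ Finset.range N, ∑ j ∈ Finset.range N, sdP2 n ξ₁ ξ₂ y i j)
        = (∑ i ∈ Finset.range N, ∑ j ∈ Finset.range N, sdD2 n ξ₁ ξ₂ y i j)
          + ((∑ i ∈ Finset.range N, ∑ j ∈ Finset.range N, sdU2 n ξ₁ ξ₂ y i j)
            + (∑ i ∈ Finset.range N, ∑ j ∈ Finset.range N, sdU2 n ξ₁ ξ₂ y j i)) := by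
      simp only [sdP2, Finset.sum_add_distrib]
    have hswap : (∑ i ∈ Finset.range N, ∑ j ∈ Finset.range N, sdU2 n ξ₁ ξ₂ y j i)
        = ∑ i ∈ Finset.range N, ∑ j ∈ Finset.range N, sdU2 n ξ₁ ξ₂ y i j :=
      Finset.sum_comm
    have hD : (∑ i ∈ Finset.range N, ∑ j ∈ Finset.range N, sdD2 n ξ₁ ξ₂ y i j)
        = ∑ i ∈ Finset.range N, dseq n ξ₁ ξ₂ i * y i ^ 2 := by
      refine Finset.sum_congr rfl fun i hi => ?_
      simp only [sdD2]
      rw [Finset.sum_ite_eq (Finset.range N) i (fun _ => dseq n ξ₁ ξ₂ i * y i ^ 2), if_pos hi]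
    have hU : (∑ i ∈ Finset.range N,
          -((sdA n ξ₁ ξ₂ i * y i ^ 2 + sdB n ξ₁ ξ₂ (i + 1) * y (i + 1) ^ 2) / 2))
        ≤ ∑ i ∈ Finset.range N, ∑ j ∈ Finset.range N, sdU2 n ξ₁ ξ₂ y i j := by
      refine Finset.sum_le_sum fun i _ => ?_
      simp only [sdU2]
      rw [Finset.sum_ite_eq (Finset.range N) (i + 1)
        (fun j => -((sdA n ξ₁ ξ₂ i * y i ^ 2 + sdB n ξ₁ ξ₂ j * y j ^ 2) / 2))]
      split_ifs with h
      · exact le_refl _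
      · have h1 : 0 ≤ sdA n ξ₁ ξ₂ i * y i ^ 2 + sdB n ξ₁ ξ₂ (i + 1) * y (i + 1) ^ 2 :=
          add_nonneg (mul_nonneg (hAnn i) (sq_nonneg _)) (mul_nonneg (hBnn (i + 1)) (sq_nonneg _))
        linarith
    have hUsum : (∑ i ∈ Finset.range N,
          -((sdA n ξ₁ ξ₂ i * y i ^ 2 + sdB n ξ₁ ξ₂ (i + 1) * y (i + 1) ^ 2) / 2))
        = -(((∑ i ∈ Finset.range N, sdA n ξ₁ ξ₂ i * y i ^ 2)
            + (∑ i ∈ Finset.range N, sdB n ξ₁ ξ₂ (i + 1) * y (i + 1) ^ 2)) / 2) := by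
      rw [← Finset.sum_add_distrib, Finset.sum_neg_distrib, ← Finset.sum_div]
    have hshift : (∑ i ∈ Finset.range N, sdB n ξ₁ ξ₂ (i + 1) * y (i + 1) ^ 2)
        = ∑ i ∈ Finset.range N, sdB n ξ₁ ξ₂ i * y i ^ 2 := by
      have h1 : (∑ k ∈ Finset.range (N + 1), sdB n ξ₁ ξ₂ k * y k ^ 2)
          = (∑ k ∈ Finset.range N, sdB n ξ₁ ξ₂ (k + 1) * y (k + 1) ^ 2)
            + sdB n ξ₁ ξ₂ 0 * y 0 ^ 2 := Finset.sum_range_succ' _ N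
      have h2 : (∑ k ∈ Finset.range (N + 1), sdB n ξ₁ ξ₂ k * y k ^ 2)
          = (∑ k ∈ Finset.range N, sdB n ξ₁ ξ₂ k * y k ^ 2)
            + sdB n ξ₁ ξ₂ N * y N ^ 2 := Finset.sum_range_succ _ N
      have hB0 : sdB n ξ₁ ξ₂ 0 * y 0 ^ 2 = 0 := by simp [sdB]
      have hBN : sdB n ξ₁ ξ₂ N * y N ^ 2 = 0 := by rw [hyN]; ring
      rw [hB0] at h1
      rw [hBN] at h2
      linarith
    have hsplit : (∑ i ∈ Finset.range N, dseq n ξ₁ ξ₂ i * y i ^ 2)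
        = (∑ i ∈ Finset.range N, sdA n ξ₁ ξ₂ i * y i ^ 2)
          + ((∑ i ∈ Finset.range N, sdB n ξ₁ ξ₂ i * y i ^ 2)
            + (∑ i ∈ Finset.range N, sdG n ξ₁ ξ₂ i * y i ^ 2)) := by
      rw [← Finset.sum_add_distrib, ← Finset.sum_add_distrib]
      exact Finset.sum_congr rfl fun i _ => by rw [sd_dseq_split]; ring
    have hGsum : 0 < ∑ i ∈ Finset.range N, sdG n ξ₁ ξ₂ i * y i ^ 2 := by
      obtain ⟨i0, hi0⟩ := Function.ne_iff.1 hx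
      refine Finset.sum_pos' (fun i _ => mul_nonneg (hGpos i).le (sq_nonneg _))
        ⟨(i0 : ℕ), Finset.mem_range.2 i0.isLt, ?_⟩
      refine mul_pos (hGpos _) ?_
      rw [hyx i0]
      exact lt_of_le_of_ne (sq_nonneg _) (Ne.symm (pow_ne_zero 2 hi0))
    have hfinal : 0 < (2 * α) * (x ⬝ᵥ (secMat n ξ₁ ξ₂ α N) *ᵥ x) := by
      rw [hq]
      linarith
    have hQF : x ⬝ᵥ (secMat n ξ₁ ξ₂ α N) *ᵥ x
        = ((2 * α) * (x ⬝ᵥ (secMat n ξ₁ ξ₂ α N) *ᵥ x)) / (2 * α) := by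
      field_simp
    rw [hQF]
    exact div_pos hfinal hα2
  exact ⟨hpd, hpd.det_pos⟩
end
end

section
/- (Lemma 3.3) The smallest eigenvalues of the finite sections form a strictly decreasing sequence of positive numbers: for every N ≥ 1, 0 < σ_{1,N+1} < σ_{1,N}. -/
noncomputable section

open Real Filter MeasureTheory Metric

namespace SDAux
open SD Real Matrix Finset

/-! ### Basic facts about the sequences -/

lemma tanh_pos' {x : ℝ} (hx : 0 < x) : 0 < Real.tanh x := by
  rw [Real.tanh_eq_sinh_div_cosh]
  exact div_pos (Real.sinh_pos_iff.2 hx) (Real.cosh_pos _)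

lemma tanh_lt_one' (x : ℝ) : Real.tanh x < 1 := by
  rw [Real.tanh_eq_sinh_div_cosh, div_lt_one (Real.cosh_pos _)]
  nlinarith [Real.cosh_sub_sinh x, Real.exp_pos (-x)]

section Spectral

open scoped RealInnerProductSpace

variable {N : ℕ} (A : Matrix (Fin N) (Fin N) ℝ)

lemma dot_self_pos {v : Fin N → ℝ} (hv : v ≠ 0) : 0 < v ⬝ᵥ v := by
  obtain ⟨i0, hi0⟩ := Function.ne_iff.1 hv
  refine Finset.sum_pos' (fun i _ => mul_self_nonneg _) ⟨i0, Finset.mem_univ _, ?_⟩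
  exact mul_self_pos.2 hi0

lemma isHermitian_of (hsym : ∀ i j, A i j = A j i) : A.IsHermitian := by
  ext i j
  rw [Matrix.conjTranspose_apply]
  simpa using hsym j i

lemma vecMul_eq_mulVec (hsym : ∀ i j, A i j = A j i) (u : Fin N → ℝ) :
    u ᵥ* A = A *ᵥ u := by
  funext i
  show ∑ k, u k * A k i = ∑ k, A i k * u k
  exact Finset.sum_congr rfl fun k _ => by rw [hsym i k]; ring

lemma inner_dot (x y : EuclideanSpace ℝ (Fin N)) :
    ⟪x, y⟫ = (fun i => x i) ⬝ᵥ (fun i => y i) := by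
  simp [PiLp.inner_apply, RCLike.inner_apply, dotProduct, mul_comm]

variable (hA : A.IsHermitian) (hN : 0 < N)

/-- smallest eigenvalue -/
def lamin : ℝ :=
  haveI : Nonempty (Fin N) := ⟨⟨0, hN⟩⟩
  Finset.univ.inf' Finset.univ_nonempty hA.eigenvalues

lemma dot_mulVec_expand (v : Fin N → ℝ) :
    v ⬝ᵥ A.mulVec v
      = ∑ i, hA.eigenvalues i * ((fun j => hA.eigenvectorBasis i j) ⬝ᵥ v) ^ 2 := by
  have hsym : ∀ i j, A i j = A j i := fun i j => by
    conv_lhs => rw [← hA]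
    simp [Matrix.conjTranspose_apply]
  set b := hA.eigenvectorBasis with hb
  set ve : EuclideanSpace ℝ (Fin N) := (WithLp.equiv 2 (Fin N → ℝ)).symm v with hve
  set Ave : EuclideanSpace ℝ (Fin N) := (WithLp.equiv 2 (Fin N → ℝ)).symm (A.mulVec v) with hAve
  have hve' : ∀ i, ve i = v i := fun i => rfl
  have hAve' : ∀ i, Ave i = A.mulVec v i := fun i => rfl
  have hmain := b.sum_inner_mul_inner ve Ave
  have hL : ⟪ve, Ave⟫ = v ⬝ᵥ A.mulVec v := by
    rw [inner_dot]
    congr 1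
  have hterm : ∀ i, ⟪ve, b i⟫ * ⟪b i, Ave⟫
      = hA.eigenvalues i * ((fun j => b i j) ⬝ᵥ v) ^ 2 := by
    intro i
    have h1 : ⟪ve, b i⟫ = (fun j => b i j) ⬝ᵥ v := by
      rw [inner_dot, dotProduct_comm]
      congr 1
    have h2 : ⟪b i, Ave⟫ = hA.eigenvalues i * ((fun j => b i j) ⬝ᵥ v) := by
      rw [inner_dot]
      have hAv : (fun j => Ave j) = A.mulVec v := rfl
      have hmv : A *ᵥ (fun j => b i j) = hA.eigenvalues i • fun j => b i j :=
        hA.mulVec_eigenvectorBasis i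
      rw [hAv, Matrix.dotProduct_mulVec, vecMul_eq_mulVec A hsym, hmv,
        smul_dotProduct]
      simp
    rw [h1, h2]
    ring
  rw [← hL, ← hmain]
  exact Finset.sum_congr rfl fun i _ => hterm i

lemma dot_self_expand (v : Fin N → ℝ) :
    v ⬝ᵥ v = ∑ i, ((fun j => hA.eigenvectorBasis i j) ⬝ᵥ v) ^ 2 := by
  set b := hA.eigenvectorBasis with hb
  set ve : EuclideanSpace ℝ (Fin N) := (WithLp.equiv 2 (Fin N → ℝ)).symm v with hve
  have hmain := b.sum_inner_mul_inner ve ve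
  have hL : ⟪ve, ve⟫ = v ⬝ᵥ v := by
    rw [inner_dot]; congr 1
  have hterm : ∀ i, ⟪ve, b i⟫ * ⟪b i, ve⟫ = ((fun j => b i j) ⬝ᵥ v) ^ 2 := by
    intro i
    have h1 : ⟪ve, b i⟫ = (fun j => b i j) ⬝ᵥ v := by
      rw [inner_dot, dotProduct_comm]; congr 1
    have h2 : ⟪b i, ve⟫ = (fun j => b i j) ⬝ᵥ v := by
      rw [inner_dot]; congr 1
    rw [h1, h2]; ring
  rw [← hL, ← hmain]
  exact Finset.sum_congr rfl fun i _ => hterm i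

lemma lamin_le_quad (v : Fin N → ℝ) :
    lamin A hA hN * (v ⬝ᵥ v) ≤ v ⬝ᵥ A.mulVec v := by
  haveI : Nonempty (Fin N) := ⟨⟨0, hN⟩⟩
  rw [dot_mulVec_expand A hA, dot_self_expand A hA, Finset.mul_sum]
  refine Finset.sum_le_sum fun i _ => ?_
  have hle : lamin A hA hN ≤ hA.eigenvalues i := Finset.inf'_le _ (Finset.mem_univ _)
  exact mul_le_mul_of_nonneg_right hle (sq_nonneg _)

lemma lamin_mem : ∃ v : Fin N → ℝ, v ≠ 0 ∧ A.mulVec v = lamin A hA hN • v := by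
  haveI : Nonempty (Fin N) := ⟨⟨0, hN⟩⟩
  obtain ⟨i0, -, hi0⟩ := Finset.exists_mem_eq_inf' (Finset.univ_nonempty (α := Fin N))
    hA.eigenvalues
  refine ⟨fun j => hA.eigenvectorBasis i0 j, ?_, ?_⟩
  · intro h
    apply hA.eigenvectorBasis.orthonormal.ne_zero i0
    ext j
    exact congrFun h j
  · have hlam : lamin A hA hN = hA.eigenvalues i0 := hi0
    rw [hlam]
    exact hA.mulVec_eigenvectorBasis i0

lemma sInf_eig_set :
    sInf {σ : ℝ | ∃ v : Fin N → ℝ, v ≠ 0 ∧ A.mulVec v = σ • v} = lamin A hA hN := by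
  have hlb : ∀ σ ∈ {σ : ℝ | ∃ v : Fin N → ℝ, v ≠ 0 ∧ A.mulVec v = σ • v},
      lamin A hA hN ≤ σ := by
    rintro σ ⟨v, hv, heig⟩
    have h1 := lamin_le_quad A hA hN v
    rw [heig] at h1
    have h2 : v ⬝ᵥ (σ • v) = σ * (v ⬝ᵥ v) := by
      rw [dotProduct_smul]; rfl
    rw [h2] at h1
    have h3 := dot_self_pos hv
    exact le_of_mul_le_mul_right (by linarith [h1]) h3
  obtain ⟨v, hv, heig⟩ := lamin_mem A hA hN
  have hmem : lamin A hA hN ∈ {σ : ℝ | ∃ v : Fin N → ℝ, v ≠ 0 ∧ A.mulVec v = σ • v} :=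
    ⟨v, hv, heig⟩
  exact le_antisymm (csInf_le ⟨lamin A hA hN, hlb⟩ hmem) (le_csInf ⟨_, hmem⟩ hlb)

end Spectral

section Params

variable (n : ℕ) (ξ₁ ξ₂ α : ℝ)

/-- argument of tanh -/
lemma targ_pos (hn : 1 ≤ n) (hξ : ξ₂ < ξ₁) (m : ℕ) :
    0 < ((m : ℝ) + (n : ℝ) / 2) * (ξ₁ - ξ₂) := by
  have h1 : (1:ℝ) ≤ (n:ℝ) := by exact_mod_cast hn
  have h2 : (0:ℝ) ≤ (m:ℝ) := Nat.cast_nonneg m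
  nlinarith

lemma cseq_pos (hn : 1 ≤ n) (hξ : ξ₂ < ξ₁) (m : ℕ) : 0 < cseq n ξ₁ ξ₂ m :=
  Real.rpow_pos_of_pos (tanh_pos' (targ_pos n ξ₁ ξ₂ hn hξ m)) _

lemma cseq_sq (hn : 1 ≤ n) (hξ : ξ₂ < ξ₁) (m : ℕ) :
    cseq n ξ₁ ξ₂ m ^ 2 = (Real.tanh (((m : ℝ) + (n : ℝ) / 2) * (ξ₁ - ξ₂)))⁻¹ := by
  have ht := tanh_pos' (targ_pos n ξ₁ ξ₂ hn hξ m)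
  rw [cseq, ← Real.rpow_natCast (_ ^ (-(1:ℝ)/2)) 2, ← Real.rpow_mul ht.le,
    show (-(1:ℝ)/2 * ((2:ℕ):ℝ) : ℝ) = -1 by push_cast; ring]
  rw [Real.rpow_neg ht.le, Real.rpow_one]

lemma one_lt_cseq_sq (hn : 1 ≤ n) (hξ : ξ₂ < ξ₁) (m : ℕ) :
    1 < cseq n ξ₁ ξ₂ m ^ 2 := by
  rw [cseq_sq n ξ₁ ξ₂ hn hξ m]
  have ht := tanh_pos' (targ_pos n ξ₁ ξ₂ hn hξ m)
  have := tanh_lt_one' (((m : ℝ) + (n : ℝ) / 2) * (ξ₁ - ξ₂))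
  rw [lt_inv_comm₀ one_pos ht]
  simpa using this

lemma wseq_succ_pos (hn : 1 ≤ n) (k : ℕ) : 0 < wseq n (k + 1) := by
  have h1 : (1:ℝ) ≤ (n:ℝ) := by exact_mod_cast hn
  apply Real.sqrt_pos.2
  push_cast
  nlinarith [Nat.cast_nonneg (α := ℝ) k]

lemma wseq_nonneg (m : ℕ) : 0 ≤ wseq n m := Real.sqrt_nonneg _

/-! ### The positive test sequence -/

/-- `g k = binom(k+n-1, k)` via recursion -/
def gg (n : ℕ) : ℕ → ℝ
  | 0 => 1
  | k + 1 => gg n k * (((k : ℝ) + n) / ((k : ℝ) + 1))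

lemma gg_pos (hn : 1 ≤ n) : ∀ k, 0 < gg n k
  | 0 => one_pos
  | k + 1 => by
    have h1 : (1:ℝ) ≤ (n:ℝ) := by exact_mod_cast hn
    have := gg_pos hn k
    have hk : (0:ℝ) ≤ (k:ℝ) := Nat.cast_nonneg k
    rw [gg]
    positivity

/-- the test sequence `y_k = e^{-kξ₂} √(g k)` -/
def yy (n : ℕ) (ξ₂ : ℝ) (k : ℕ) : ℝ := Real.exp (-(k : ℝ) * ξ₂) * Real.sqrt (gg n k)

lemma yy_pos (hn : 1 ≤ n) (k : ℕ) : 0 < yy n ξ₂ k :=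
  mul_pos (Real.exp_pos _) (Real.sqrt_pos.2 (gg_pos n hn k))

lemma sqrt_gg_succ (hn : 1 ≤ n) (k : ℕ) :
    wseq n (k + 1) * Real.sqrt (gg n k) = ((k : ℝ) + 1) * Real.sqrt (gg n (k + 1)) := by
  have h1 : (1:ℝ) ≤ (n:ℝ) := by exact_mod_cast hn
  have hk : (0:ℝ) ≤ (k:ℝ) := Nat.cast_nonneg k
  have hg := gg_pos n hn k
  rw [wseq, ← Real.sqrt_mul (by push_cast; nlinarith) _]
  rw [show ((k:ℝ) + 1) = Real.sqrt (((k:ℝ)+1)^2) by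
    rw [Real.sqrt_sq (by positivity)]]
  rw [← Real.sqrt_mul (by positivity)]
  congr 1
  rw [gg]
  push_cast
  field_simp
  ring

lemma sqrt_gg_succ' (hn : 1 ≤ n) (k : ℕ) :
    wseq n (k + 1) * Real.sqrt (gg n (k + 1)) = ((k : ℝ) + n) * Real.sqrt (gg n k) := by
  have h1 : (1:ℝ) ≤ (n:ℝ) := by exact_mod_cast hn
  have hk : (0:ℝ) ≤ (k:ℝ) := Nat.cast_nonneg k
  have hg := gg_pos n hn k
  rw [wseq, ← Real.sqrt_mul (by push_cast; nlinarith) _,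
    show ((k:ℝ) + n) = Real.sqrt (((k:ℝ)+n)^2) from (Real.sqrt_sq (by nlinarith)).symm,
    ← Real.sqrt_mul (by positivity) _]
  congr 1
  rw [show gg n (k+1) = gg n k * (((k:ℝ)+n)/((k:ℝ)+1)) from rfl]
  push_cast
  field_simp
  ring

lemma wy_left (hn : 1 ≤ n) (k : ℕ) :
    wseq n (k + 1) * yy n ξ₂ k = ((k : ℝ) + 1) * Real.exp ξ₂ * yy n ξ₂ (k + 1) := by
  have h := sqrt_gg_succ n hn k
  have he : Real.exp ξ₂ * Real.exp (-((k:ℝ)+1) * ξ₂) = Real.exp (-(k:ℝ) * ξ₂) := by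
    rw [← Real.exp_add]; ring_nf
  unfold yy
  push_cast
  calc wseq n (k + 1) * (Real.exp (-(k:ℝ) * ξ₂) * Real.sqrt (gg n k))
      = Real.exp (-(k:ℝ) * ξ₂) * (wseq n (k+1) * Real.sqrt (gg n k)) := by ring
    _ = Real.exp (-(k:ℝ) * ξ₂) * (((k:ℝ) + 1) * Real.sqrt (gg n (k + 1))) := by rw [h]
    _ = ((k:ℝ) + 1) * Real.exp ξ₂ * (Real.exp (-((k:ℝ)+1) * ξ₂) * Real.sqrt (gg n (k+1))) := by
        rw [← he]; ring
  
lemma wy_right (hn : 1 ≤ n) (k : ℕ) :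
    wseq n (k + 1) * yy n ξ₂ (k + 1) = ((k : ℝ) + n) * Real.exp (-ξ₂) * yy n ξ₂ k := by
  have h := sqrt_gg_succ' n hn k
  have he : Real.exp (-ξ₂) * Real.exp (-(k:ℝ) * ξ₂) = Real.exp (-((k:ℝ)+1) * ξ₂) := by
    rw [← Real.exp_add]; ring_nf
  unfold yy
  push_cast
  calc wseq n (k + 1) * (Real.exp (-((k:ℝ)+1) * ξ₂) * Real.sqrt (gg n (k+1)))
      = Real.exp (-((k:ℝ)+1) * ξ₂) * (wseq n (k+1) * Real.sqrt (gg n (k+1))) := by ring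
    _ = Real.exp (-((k:ℝ)+1) * ξ₂) * (((k:ℝ) + n) * Real.sqrt (gg n k)) := by rw [h]
    _ = ((k:ℝ) + n) * Real.exp (-ξ₂) * (Real.exp (-(k:ℝ) * ξ₂) * Real.sqrt (gg n k)) := by
        rw [← he]; ring

/-! ### Tridiagonal structure -/

/-- off-diagonal entry between `k` and `k+1` -/
def offd (k : ℕ) : ℝ := -(wseq n (k + 1) * cseq n ξ₁ ξ₂ k * cseq n ξ₁ ξ₂ (k + 1)) / (2 * α)

/-- diagonal entry -/
def diagd (k : ℕ) : ℝ := dseq n ξ₁ ξ₂ k / (2 * α)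

lemma offd_neg (hn : 1 ≤ n) (hξ : ξ₂ < ξ₁) (hα : 0 < α) (k : ℕ) :
    offd n ξ₁ ξ₂ α k < 0 := by
  unfold offd
  apply div_neg_of_neg_of_pos _ (by linarith)
  have h := mul_pos (mul_pos (wseq_succ_pos n hn k) (cseq_pos n ξ₁ ξ₂ hn hξ k))
    (cseq_pos n ξ₁ ξ₂ hn hξ (k + 1))
  linarith

lemma secMat_apply {N : ℕ} (i j : Fin N) :
    secMat n ξ₁ ξ₂ α N i j =
      (if (j : ℕ) = (i : ℕ) then diagd n ξ₁ ξ₂ α (i : ℕ) else 0)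
      + (if (j : ℕ) + 1 = (i : ℕ) then offd n ξ₁ ξ₂ α (j : ℕ) else 0)
      + (if (j : ℕ) = (i : ℕ) + 1 then offd n ξ₁ ξ₂ α (i : ℕ) else 0) := by
  simp only [secMat, Matrix.of_apply, diagd, offd]
  split_ifs <;> try omega
  all_goals first
    | ring1
    | (rw [show (max (i:ℕ) (j:ℕ)) = 1 + (j:ℕ) by omega, show (min (i:ℕ) (j:ℕ)) = (j:ℕ) by omega]; ring)
    | (rw [show (max (i:ℕ) (j:ℕ)) = 1 + (i:ℕ) by omega, show (min (i:ℕ) (j:ℕ)) = (i:ℕ) by omega]; ring)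
    | (rw [show (max (i:ℕ) (j:ℕ)) = (j:ℕ) + 1 by omega, show (min (i:ℕ) (j:ℕ)) = (j:ℕ) by omega]; ring)
    | (rw [show (max (i:ℕ) (j:ℕ)) = (i:ℕ) + 1 by omega, show (min (i:ℕ) (j:ℕ)) = (i:ℕ) by omega]; ring)

lemma row_eq {N : ℕ} (u : ℕ → ℝ) (i : Fin N) :
    (secMat n ξ₁ ξ₂ α N).mulVec (fun j : Fin N => u (j : ℕ)) i
      = diagd n ξ₁ ξ₂ α (i : ℕ) * u (i : ℕ)
        + (if 1 ≤ (i : ℕ) then offd n ξ₁ ξ₂ α ((i : ℕ) - 1) * u ((i : ℕ) - 1) else 0)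
        + (if (i : ℕ) + 1 < N then offd n ξ₁ ξ₂ α (i : ℕ) * u ((i : ℕ) + 1) else 0) := by
  have e1 : ∑ j : Fin N, (if (j:ℕ) = (i:ℕ) then diagd n ξ₁ ξ₂ α (i:ℕ) * u (j:ℕ) else 0)
      = diagd n ξ₁ ξ₂ α (i:ℕ) * u (i:ℕ) := by
    rw [Fin.sum_univ_eq_sum_range
        (fun b => if b = (i:ℕ) then diagd n ξ₁ ξ₂ α (i:ℕ) * u b else 0) N,
      Finset.sum_ite_eq' (Finset.range N) ((i:ℕ)) (fun b => diagd n ξ₁ ξ₂ α (i:ℕ) * u b),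
      if_pos (Finset.mem_range.2 i.isLt)]
  have e2 : ∑ j : Fin N, (if (j:ℕ) + 1 = (i:ℕ) then offd n ξ₁ ξ₂ α (j:ℕ) * u (j:ℕ) else 0)
      = (if 1 ≤ (i:ℕ) then offd n ξ₁ ξ₂ α ((i:ℕ)-1) * u ((i:ℕ)-1) else 0) := by
    rw [Fin.sum_univ_eq_sum_range
      (fun b => if b + 1 = (i:ℕ) then offd n ξ₁ ξ₂ α b * u b else 0) N]
    by_cases hi : 1 ≤ (i:ℕ)
    · rw [if_pos hi]
      have hc : ∀ b : ℕ, (b + 1 = (i:ℕ)) = (b = (i:ℕ) - 1) :=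
        fun b => propext (by constructor <;> omega)
      simp only [hc]
      rw [Finset.sum_ite_eq' (Finset.range N) ((i:ℕ) - 1) (fun b => offd n ξ₁ ξ₂ α b * u b),
        if_pos (Finset.mem_range.2 (by have := i.isLt; omega))]
    · rw [if_neg hi]
      have hc : ∀ b : ℕ, ¬ (b + 1 = (i:ℕ)) := by omega
      simp [hc]
  have e3 : ∑ j : Fin N, (if (j:ℕ) = (i:ℕ) + 1 then offd n ξ₁ ξ₂ α (i:ℕ) * u (j:ℕ) else 0)
      = (if (i:ℕ) + 1 < N then offd n ξ₁ ξ₂ α (i:ℕ) * u ((i:ℕ)+1) else 0) := by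
    rw [Fin.sum_univ_eq_sum_range
        (fun b => if b = (i:ℕ)+1 then offd n ξ₁ ξ₂ α (i:ℕ) * u b else 0) N,
      Finset.sum_ite_eq' (Finset.range N) ((i:ℕ)+1) (fun b => offd n ξ₁ ξ₂ α (i:ℕ) * u b)]
    by_cases h : (i:ℕ)+1 < N
    · rw [if_pos (Finset.mem_range.2 h), if_pos h]
    · rw [if_neg (fun hc => h (Finset.mem_range.1 hc)), if_neg h]
  calc (secMat n ξ₁ ξ₂ α N).mulVec (fun j : Fin N => u (j:ℕ)) i
      = ∑ j : Fin N, secMat n ξ₁ ξ₂ α N i j * u (j:ℕ) := by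
        simp [Matrix.mulVec, dotProduct]
    _ = ∑ j : Fin N,
        ((if (j:ℕ) = (i:ℕ) then diagd n ξ₁ ξ₂ α (i:ℕ) * u (j:ℕ) else 0)
          + (if (j:ℕ) + 1 = (i:ℕ) then offd n ξ₁ ξ₂ α (j:ℕ) * u (j:ℕ) else 0)
          + (if (j:ℕ) = (i:ℕ) + 1 then offd n ξ₁ ξ₂ α (i:ℕ) * u (j:ℕ) else 0)) := by
        refine Finset.sum_congr rfl (fun j _ => ?_)
        rw [secMat_apply n ξ₁ ξ₂ α i j]
        simp only [add_mul, ite_mul, zero_mul]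
    _ = _ := by rw [Finset.sum_add_distrib, Finset.sum_add_distrib, e1, e2, e3]

/-! ### The positive vector x with (L x) > 0 -/

def xx (k : ℕ) : ℝ := yy n ξ₂ k / cseq n ξ₁ ξ₂ k

lemma xx_pos (hn : 1 ≤ n) (hξ : ξ₂ < ξ₁) (k : ℕ) : 0 < xx n ξ₁ ξ₂ k :=
  div_pos (yy_pos n ξ₂ hn k) (cseq_pos n ξ₁ ξ₂ hn hξ k)

lemma row0_eq (hn : 1 ≤ n) (hξ : ξ₂ < ξ₁) (hα : 0 < α) :
    diagd n ξ₁ ξ₂ α 0 * xx n ξ₁ ξ₂ 0 + offd n ξ₁ ξ₂ α 0 * xx n ξ₁ ξ₂ 1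
      = yy n ξ₂ 0 * ((n:ℝ) * Real.sinh ξ₂) * (cseq n ξ₁ ξ₂ 0 ^ 2 - 1)
        / (2 * α * cseq n ξ₁ ξ₂ 0) := by
  have hw2 := wy_right n ξ₂ hn 0
  have hch := Real.cosh_add_sinh ξ₂
  have hcs := Real.cosh_sub_sinh ξ₂
  have hc0 := (cseq_pos n ξ₁ ξ₂ hn hξ 0).ne'
  have hc1 := (cseq_pos n ξ₁ ξ₂ hn hξ 1).ne'
  have hαne : α ≠ 0 := ne_of_gt hα
  have h2 : offd n ξ₁ ξ₂ α 0 * xx n ξ₁ ξ₂ 1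
      = -(cseq n ξ₁ ξ₂ 0 * (wseq n (0+1) * yy n ξ₂ (0+1))) / (2 * α) := by
    unfold offd xx; field_simp
  rw [hw2] at h2
  rw [h2]
  unfold diagd dseq xx
  rw [← hcs]
  clear hcs hch hw2 h2
  push_cast
  generalize Real.cosh ξ₂ = C
  generalize Real.sinh ξ₂ = S
  field_simp
  ring

lemma rowS_eq (hn : 1 ≤ n) (hξ : ξ₂ < ξ₁) (hα : 0 < α) (k : ℕ) :
    diagd n ξ₁ ξ₂ α (k+1) * xx n ξ₁ ξ₂ (k+1) + offd n ξ₁ ξ₂ α k * xx n ξ₁ ξ₂ k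
      + offd n ξ₁ ξ₂ α (k+1) * xx n ξ₁ ξ₂ (k+2)
    = yy n ξ₂ (k+1) * ((n:ℝ) * Real.sinh ξ₂) * (cseq n ξ₁ ξ₂ (k+1) ^ 2 - 1)
        / (2 * α * cseq n ξ₁ ξ₂ (k+1)) := by
  have hw1 := wy_left n ξ₂ hn k
  have hw2 := wy_right n ξ₂ hn (k+1)
  have hch := Real.cosh_add_sinh ξ₂
  have hcs := Real.cosh_sub_sinh ξ₂
  have hc0 := (cseq_pos n ξ₁ ξ₂ hn hξ k).ne'
  have hc1 := (cseq_pos n ξ₁ ξ₂ hn hξ (k+1)).ne'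
  have hc2 := (cseq_pos n ξ₁ ξ₂ hn hξ (k+2)).ne'
  have hαne : α ≠ 0 := ne_of_gt hα
  have h1 : offd n ξ₁ ξ₂ α k * xx n ξ₁ ξ₂ k
      = -(cseq n ξ₁ ξ₂ (k+1) * (wseq n (k+1) * yy n ξ₂ k)) / (2 * α) := by
    unfold offd xx; field_simp
  have h2 : offd n ξ₁ ξ₂ α (k+1) * xx n ξ₁ ξ₂ (k+2)
      = -(cseq n ξ₁ ξ₂ (k+1) * (wseq n (k+1+1) * yy n ξ₂ (k+1+1))) / (2 * α) := by
    unfold offd xx; field_simp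
  rw [hw1] at h1
  rw [hw2] at h2
  rw [h1, h2]
  unfold diagd dseq xx
  rw [← hch, ← hcs]
  clear hcs hch hw1 hw2 h1 h2
  push_cast
  generalize Real.cosh ξ₂ = C
  generalize Real.sinh ξ₂ = S
  field_simp
  ring

lemma mulVec_xx_pos (hn : 1 ≤ n) (hξ : ξ₂ < ξ₁) (hξ₂ : 0 < ξ₂) (hα : 0 < α)
    {N : ℕ} (i : Fin N) :
    0 < (secMat n ξ₁ ξ₂ α N).mulVec (fun j : Fin N => xx n ξ₁ ξ₂ (j : ℕ)) i := by
  have hsinh : 0 < Real.sinh ξ₂ := Real.sinh_pos_iff.2 hξ₂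
  have hn' : (1:ℝ) ≤ (n:ℝ) := by exact_mod_cast hn
  rw [row_eq]
  have hoffxx : ∀ a b : ℕ, offd n ξ₁ ξ₂ α a * xx n ξ₁ ξ₂ b < 0 :=
    fun a b => mul_neg_of_neg_of_pos (offd_neg n ξ₁ ξ₂ α hn hξ hα a) (xx_pos n ξ₁ ξ₂ hn hξ b)
  have hguard : ∀ (c : Prop) [Decidable c] (a b : ℕ),
      offd n ξ₁ ξ₂ α a * xx n ξ₁ ξ₂ b ≤ (if c then offd n ξ₁ ξ₂ α a * xx n ξ₁ ξ₂ b else 0) := by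
    intro c _ a b
    by_cases h : c
    · rw [if_pos h]
    · rw [if_neg h]; exact (hoffxx a b).le
  have hrhs : ∀ m : ℕ, 0 < yy n ξ₂ m * ((n:ℝ) * Real.sinh ξ₂) * (cseq n ξ₁ ξ₂ m ^ 2 - 1)
      / (2 * α * cseq n ξ₁ ξ₂ m) := by
    intro m
    have h1 := yy_pos n ξ₂ hn m
    have h2 := one_lt_cseq_sq n ξ₁ ξ₂ hn hξ m
    have h3 := cseq_pos n ξ₁ ξ₂ hn hξ m
    apply div_pos _ (by positivity)
    apply mul_pos (mul_pos h1 (by positivity)) (by linarith)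
  rcases Nat.eq_zero_or_pos (i : ℕ) with h0 | h1
  · rw [h0]
    rw [if_neg (by omega)]
    have := hguard ((0:ℕ) + 1 < N) 0 1
    have h := row0_eq n ξ₁ ξ₂ α hn hξ hα
    have := hrhs 0
    simp only [Nat.zero_add] at this ⊢
    linarith [hguard (0 + 1 < N) 0 (0 + 1)]
  · set k := (i : ℕ) - 1 with hk
    have hik : (i : ℕ) = k + 1 := by omega
    rw [hik, if_pos (by omega)]
    have h := rowS_eq n ξ₁ ξ₂ α hn hξ hα k
    have hpos := hrhs (k+1)
    rw [show k+1+1 = k+2 from rfl]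
    have hg2 := hguard (k + 2 < N) (k+1) (k+2)
    linarith

/-! ### positive definiteness from the M-matrix structure -/

lemma quad_pos {N : ℕ} (A : Matrix (Fin N) (Fin N) ℝ)
    (hsym : ∀ i j, A i j = A j i) (hoff : ∀ i j : Fin N, i ≠ j → A i j ≤ 0)
    (x : Fin N → ℝ) (hx : ∀ i, 0 < x i) (hAx : ∀ i, 0 < A.mulVec x i)
    (v : Fin N → ℝ) (hv : v ≠ 0) : 0 < v ⬝ᵥ A.mulVec v := by
  classical
  have hterm : ∀ i j : Fin N,
      A i j * ((x j / x i) * v i ^ 2 + (x i / x j) * v j ^ 2) / 2 ≤ v i * (A i j * v j) := by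
    intro i j
    by_cases h : i = j
    · subst h; rw [div_self (hx i).ne']; apply le_of_eq; ring
    · have hA := hoff i j h
      have hxi := hx i; have hxj := hx j
      have key : 2 * (v i * v j) ≤ (x j / x i) * v i ^ 2 + (x i / x j) * v j ^ 2 := by
        rw [div_mul_eq_mul_div, div_mul_eq_mul_div, div_add_div _ _ hxi.ne' hxj.ne',
          le_div_iff₀ (mul_pos hxi hxj)]
        nlinarith [sq_nonneg (x j * v i - x i * v j)]
      nlinarith [key, hA, mul_pos hxi hxj]
  have hmv : ∀ i, A.mulVec x i = ∑ j, A i j * x j := by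
    intro i; simp [Matrix.mulVec, dotProduct]
  have hsum : ∑ i, ∑ j, A i j * ((x j / x i) * v i ^ 2 + (x i / x j) * v j ^ 2) / 2
      = ∑ i, (v i ^ 2 / x i) * A.mulVec x i := by
    have swap : ∑ i : Fin N, ∑ j : Fin N, A i j * ((x i / x j) * v j ^ 2)
        = ∑ i : Fin N, ∑ j : Fin N, A i j * ((x j / x i) * v i ^ 2) := by
      rw [Finset.sum_comm]
      exact Finset.sum_congr rfl fun i _ => Finset.sum_congr rfl fun j _ => by rw [hsym j i]
    have expand : ∀ i j : Fin N, A i j * ((x j / x i) * v i ^ 2 + (x i / x j) * v j ^ 2) / 2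
        = A i j * ((x j / x i) * v i ^ 2) / 2 + A i j * ((x i / x j) * v j ^ 2) / 2 := by
      intro i j; ring
    calc ∑ i, ∑ j, A i j * ((x j / x i) * v i ^ 2 + (x i / x j) * v j ^ 2) / 2
        = ∑ i, ∑ j, (A i j * ((x j / x i) * v i ^ 2) / 2
            + A i j * ((x i / x j) * v j ^ 2) / 2) := by
          exact Finset.sum_congr rfl fun i _ =>
            Finset.sum_congr rfl fun j _ => expand i j
      _ = (∑ i, ∑ j, A i j * ((x j / x i) * v i ^ 2)) / 2
            + (∑ i, ∑ j, A i j * ((x i / x j) * v j ^ 2)) / 2 := by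
          simp only [Finset.sum_add_distrib, Finset.sum_div]
      _ = ∑ i, ∑ j, A i j * ((x j / x i) * v i ^ 2) := by rw [swap]; ring
      _ = ∑ i, (v i ^ 2 / x i) * A.mulVec x i := by
          refine Finset.sum_congr rfl fun i _ => ?_
          rw [hmv i, Finset.mul_sum]
          refine Finset.sum_congr rfl fun j _ => ?_
          field_simp
  have hpos : 0 < ∑ i, (v i ^ 2 / x i) * A.mulVec x i := by
    obtain ⟨i0, hi0⟩ := Function.ne_iff.1 hv
    refine Finset.sum_pos' (fun i _ => ?_) ⟨i0, Finset.mem_univ i0, ?_⟩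
    · exact mul_nonneg (div_nonneg (sq_nonneg _) (hx i).le) (hAx i).le
    · have hsq : 0 < v i0 ^ 2 := (sq_nonneg (v i0)).lt_of_ne (Ne.symm (pow_ne_zero 2 hi0))
      exact mul_pos (div_pos hsq (hx i0)) (hAx i0)
  have hdot : v ⬝ᵥ A.mulVec v = ∑ i, ∑ j, v i * (A i j * v j) := by
    simp [dotProduct, Matrix.mulVec, Finset.mul_sum]
  calc (0:ℝ) < ∑ i, (v i ^ 2 / x i) * A.mulVec x i := hpos
    _ = ∑ i, ∑ j, A i j * ((x j / x i) * v i ^ 2 + (x i / x j) * v j ^ 2) / 2 := hsum.symm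
    _ ≤ ∑ i, ∑ j, v i * (A i j * v j) :=
        Finset.sum_le_sum fun i _ => Finset.sum_le_sum fun j _ => hterm i j
    _ = v ⬝ᵥ A.mulVec v := hdot.symm


/-! ### symmetry and sign structure of `secMat` -/

lemma secMat_symm {N : ℕ} (i j : Fin N) :
    secMat n ξ₁ ξ₂ α N i j = secMat n ξ₁ ξ₂ α N j i := by
  simp only [secMat, Matrix.of_apply]
  by_cases h1 : (i : ℕ) = (j : ℕ)
  · rw [h1]
  · have h1' : ¬((j : ℕ) = (i : ℕ)) := fun h => h1 h.symm
    rw [if_neg h1, if_neg h1']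
    by_cases h2 : ((i:ℕ) + 1 = (j:ℕ) ∨ (j:ℕ) + 1 = (i:ℕ))
    · rw [if_pos h2, if_pos (Or.symm h2), max_comm ((i:ℕ)) ((j:ℕ)),
        min_comm ((i:ℕ)) ((j:ℕ))]
    · rw [if_neg h2, if_neg (fun h => h2 (Or.symm h))]

lemma secMat_herm {N : ℕ} : (secMat n ξ₁ ξ₂ α N).IsHermitian :=
  isHermitian_of _ (secMat_symm n ξ₁ ξ₂ α)

lemma secMat_offdiag_nonpos (hn : 1 ≤ n) (hξ : ξ₂ < ξ₁) (hα : 0 < α) {N : ℕ} :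
    ∀ i j : Fin N, i ≠ j → secMat n ξ₁ ξ₂ α N i j ≤ 0 := by
  intro i j hij
  have hij' : ¬((j : ℕ) = (i : ℕ)) := fun h => hij (Fin.ext h.symm)
  rw [secMat_apply, if_neg hij']
  by_cases h2 : (j : ℕ) + 1 = (i : ℕ)
  · rw [if_pos h2, if_neg (by omega)]
    have := (offd_neg n ξ₁ ξ₂ α hn hξ hα (j : ℕ)).le
    linarith
  · rw [if_neg h2]
    by_cases h3 : (j : ℕ) = (i : ℕ) + 1
    · rw [if_pos h3]
      have := (offd_neg n ξ₁ ξ₂ α hn hξ hα (i : ℕ)).le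
      linarith
    · rw [if_neg h3]; norm_num

/-! ### the smallest eigenvalue is positive -/

lemma sigma1_eq_lamin {N : ℕ} (hN : 0 < N) :
    sigma1 n ξ₁ ξ₂ α N = lamin (secMat n ξ₁ ξ₂ α N) (secMat_herm n ξ₁ ξ₂ α) hN :=
  sInf_eig_set _ _ hN

lemma lamin_pos (hn : 1 ≤ n) (hξ : ξ₂ < ξ₁) (hξ₂ : 0 < ξ₂) (hα : 0 < α)
    {N : ℕ} (hN : 0 < N) :
    0 < lamin (secMat n ξ₁ ξ₂ α N) (secMat_herm n ξ₁ ξ₂ α) hN := by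
  obtain ⟨v, hv, heig⟩ := lamin_mem (secMat n ξ₁ ξ₂ α N) (secMat_herm n ξ₁ ξ₂ α) hN
  have hq := quad_pos (secMat n ξ₁ ξ₂ α N) (secMat_symm n ξ₁ ξ₂ α)
    (secMat_offdiag_nonpos n ξ₁ ξ₂ α hn hξ hα)
    (fun j : Fin N => xx n ξ₁ ξ₂ (j : ℕ)) (fun j => xx_pos n ξ₁ ξ₂ hn hξ (j : ℕ))
    (fun i => mulVec_xx_pos n ξ₁ ξ₂ α hn hξ hξ₂ hα i) v hv
  rw [heig, dotProduct_smul] at hq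
  have hvv := dot_self_pos hv
  have hq' : (0:ℝ) < lamin (secMat n ξ₁ ξ₂ α N) (secMat_herm n ξ₁ ξ₂ α) hN * (v ⬝ᵥ v) := hq
  nlinarith

/-! ### last coordinate of an eigenvector is nonzero -/

lemma last_ne_zero (hn : 1 ≤ n) (hξ : ξ₂ < ξ₁) (hα : 0 < α) {N : ℕ} (hN : 0 < N)
    (μ : ℝ) (v : Fin N → ℝ) (hv : v ≠ 0)
    (heig : (secMat n ξ₁ ξ₂ α N).mulVec v = μ • v) (hNlt : N - 1 < N) :
    v ⟨N - 1, hNlt⟩ ≠ 0 := by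
  intro hlast
  set u : ℕ → ℝ := fun m => if h : m < N then v ⟨m, h⟩ else 0 with hu_def
  have huv : ∀ (a : ℕ) (ha : a < N), u a = v ⟨a, ha⟩ := by
    intro a ha; simp only [hu_def]; rw [dif_pos ha]
  have hveq : (fun j : Fin N => u (j : ℕ)) = v := by
    funext j; rw [huv (j : ℕ) j.isLt, Fin.eta]
  have hrow : ∀ (a : ℕ) (ha : a < N),
      diagd n ξ₁ ξ₂ α a * u a
        + (if 1 ≤ a then offd n ξ₁ ξ₂ α (a - 1) * u (a - 1) else 0)
        + (if a + 1 < N then offd n ξ₁ ξ₂ α a * u (a + 1) else 0) = μ * u a := by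
    intro a ha
    have h1 := row_eq n ξ₁ ξ₂ α u (⟨a, ha⟩ : Fin N)
    rw [hveq, heig] at h1
    have h2 : (μ • v) (⟨a, ha⟩ : Fin N) = μ * u a := by
      rw [Pi.smul_apply, smul_eq_mul, huv a ha]
    rw [h2] at h1
    simpa using h1.symm
  have hulast : u (N - 1) = 0 := by rw [huv (N-1) hNlt]; exact hlast
  have key : ∀ m : ℕ, u (N - 1 - m) = 0 := by
    intro m
    induction m using Nat.strong_induction_on with
    | _ m ih =>
      rcases Nat.eq_zero_or_pos m with rfl | hm1
      · simpa using hulast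
      · by_cases hm : m ≤ N - 1
        · set a := N - m with ha_def
          have haN : a < N := by omega
          have ha1 : 1 ≤ a := by omega
          have hua : u a = 0 := by
            have := ih (m - 1) (by omega)
            rwa [show N - 1 - (m - 1) = a by omega] at this
          have hrowa := hrow a haN
          have hup : (if a + 1 < N then offd n ξ₁ ξ₂ α a * u (a + 1) else 0) = 0 := by
            by_cases h : a + 1 < N
            · rw [if_pos h]
              have hm2 : 2 ≤ m := by omega
              have := ih (m - 2) (by omega)
              rw [show N - 1 - (m - 2) = a + 1 by omega] at this
              rw [this, mul_zero]
            · rw [if_neg h]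
          rw [hua, hup, if_pos ha1, mul_zero, mul_zero] at hrowa
          have hoffne := (offd_neg n ξ₁ ξ₂ α hn hξ hα (a - 1)).ne
          have : u (a - 1) = 0 := by
            rcases mul_eq_zero.1 (by linarith [hrowa] : offd n ξ₁ ξ₂ α (a-1) * u (a-1) = 0) with h | h
            · exact absurd h hoffne
            · exact h
          rwa [show N - 1 - m = a - 1 by omega]
        · have := ih (N - 1) (by omega)
          rwa [show N - 1 - m = N - 1 - (N - 1) by omega]
  apply hv
  funext j
  have := key (N - 1 - (j : ℕ))
  rw [show N - 1 - (N - 1 - (j : ℕ)) = (j : ℕ) by have := j.isLt; omega] at this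
  rw [huv (j : ℕ) j.isLt, Fin.eta] at this
  exact this

/-! ### extension of a vector by one coordinate -/

lemma dot_extend {N : ℕ} (u : ℕ → ℝ) :
    (fun j : Fin (N+1) => u (j : ℕ)) ⬝ᵥ (fun j : Fin (N+1) => u (j : ℕ))
      = (fun j : Fin N => u (j : ℕ)) ⬝ᵥ (fun j : Fin N => u (j : ℕ)) + u N ^ 2 := by
  show (∑ i : Fin (N+1), u (i : ℕ) * u (i : ℕ)) = (∑ i : Fin N, u (i : ℕ) * u (i : ℕ)) + u N ^ 2
  rw [Fin.sum_univ_castSucc]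
  simp only [Fin.coe_castSucc, Fin.val_last]
  ring

lemma quad_extend (hn : 1 ≤ n) (hξ : ξ₂ < ξ₁) (hα : 0 < α) {N : ℕ} (hN : 0 < N)
    (u : ℕ → ℝ) :
    (fun j : Fin (N+1) => u (j : ℕ)) ⬝ᵥ
        (secMat n ξ₁ ξ₂ α (N+1)).mulVec (fun j : Fin (N+1) => u (j : ℕ))
      = (fun j : Fin N => u (j : ℕ)) ⬝ᵥ
          (secMat n ξ₁ ξ₂ α N).mulVec (fun j : Fin N => u (j : ℕ))
        + 2 * u N * (offd n ξ₁ ξ₂ α (N-1) * u (N-1)) + u N ^ 2 * diagd n ξ₁ ξ₂ α N := by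
  have hterm : ∀ i' : Fin N,
      (secMat n ξ₁ ξ₂ α (N+1)).mulVec (fun j : Fin (N+1) => u (j : ℕ)) (Fin.castSucc i')
        = (secMat n ξ₁ ξ₂ α N).mulVec (fun j : Fin N => u (j : ℕ)) i'
          + (if (i' : ℕ) + 1 = N then offd n ξ₁ ξ₂ α (i' : ℕ) * u N else 0) := by
    intro i'
    rw [row_eq n ξ₁ ξ₂ α u (Fin.castSucc i'), row_eq n ξ₁ ξ₂ α u i']
    simp only [Fin.coe_castSucc]
    by_cases hlt : (i' : ℕ) + 1 < N
    · rw [if_pos (show (i':ℕ) + 1 < N + 1 by omega), if_pos hlt,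
        if_neg (show ¬((i':ℕ) + 1 = N) by omega)]
      ring
    · have heq : (i' : ℕ) + 1 = N := by have := i'.isLt; omega
      rw [if_pos (show (i':ℕ) + 1 < N + 1 by omega), if_neg hlt, if_pos heq, heq]
      ring
  have hlastrow :
      (secMat n ξ₁ ξ₂ α (N+1)).mulVec (fun j : Fin (N+1) => u (j : ℕ)) (Fin.last N)
        = diagd n ξ₁ ξ₂ α N * u N + offd n ξ₁ ξ₂ α (N-1) * u (N-1) := by
    rw [row_eq n ξ₁ ξ₂ α u (Fin.last N)]
    simp only [Fin.val_last]
    rw [if_pos (by omega : 1 ≤ N), if_neg (by omega : ¬(N + 1 < N + 1))]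
    ring
  have hsum2 : (∑ i' : Fin N,
      u (i' : ℕ) * (if (i' : ℕ) + 1 = N then offd n ξ₁ ξ₂ α (i' : ℕ) * u N else 0))
      = u (N - 1) * (offd n ξ₁ ξ₂ α (N-1) * u N) := by
    have hc : ∀ i' : Fin N,
        u (i' : ℕ) * (if (i' : ℕ) + 1 = N then offd n ξ₁ ξ₂ α (i' : ℕ) * u N else 0)
          = (if (i' : ℕ) = N - 1 then u (i' : ℕ) * (offd n ξ₁ ξ₂ α (i' : ℕ) * u N) else 0) := by
      intro i'
      by_cases h : (i' : ℕ) + 1 = N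
      · rw [if_pos h, if_pos (by omega)]
      · rw [if_neg h, if_neg (by omega), mul_zero]
    rw [Finset.sum_congr rfl (fun i' _ => hc i')]
    rw [Fin.sum_univ_eq_sum_range
      (fun b => if b = N - 1 then u b * (offd n ξ₁ ξ₂ α b * u N) else 0) N,
      Finset.sum_ite_eq' (Finset.range N) (N - 1)
        (fun b => u b * (offd n ξ₁ ξ₂ α b * u N)),
      if_pos (Finset.mem_range.2 (by omega))]
  show (∑ i : Fin (N+1), u (i : ℕ) *
      (secMat n ξ₁ ξ₂ α (N+1)).mulVec (fun j : Fin (N+1) => u (j : ℕ)) i) = _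
  rw [Fin.sum_univ_castSucc]
  simp only [Fin.coe_castSucc, Fin.val_last]
  rw [Finset.sum_congr rfl (fun i' _ => by rw [hterm i']), hlastrow]
  have hsplit : (∑ i' : Fin N, u (i' : ℕ) *
      ((secMat n ξ₁ ξ₂ α N).mulVec (fun j : Fin N => u (j : ℕ)) i'
        + (if (i' : ℕ) + 1 = N then offd n ξ₁ ξ₂ α (i' : ℕ) * u N else 0)))
      = (∑ i' : Fin N, u (i' : ℕ) *
          (secMat n ξ₁ ξ₂ α N).mulVec (fun j : Fin N => u (j : ℕ)) i')
        + (∑ i' : Fin N, u (i' : ℕ) *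
          (if (i' : ℕ) + 1 = N then offd n ξ₁ ξ₂ α (i' : ℕ) * u N else 0)) := by
    rw [← Finset.sum_add_distrib]
    exact Finset.sum_congr rfl fun i' _ => by ring
  rw [hsplit, hsum2]
  have hdot : (fun j : Fin N => u (j : ℕ)) ⬝ᵥ
      (secMat n ξ₁ ξ₂ α N).mulVec (fun j : Fin N => u (j : ℕ))
      = ∑ i' : Fin N, u (i' : ℕ) *
          (secMat n ξ₁ ξ₂ α N).mulVec (fun j : Fin N => u (j : ℕ)) i' := rfl
  rw [hdot]
  ring

end Params


end SDAux


open SD in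
/-- Lemma 3.3: the smallest eigenvalues of the finite sections form a strictly decreasing
sequence of positive numbers. -/
theorem sigma1_pos_strict_anti
    (n : ℕ) (hn : 1 ≤ n) (ξ₁ ξ₂ α : ℝ) (hξ : ξ₂ < ξ₁) (hξ₂ : 0 < ξ₂) (hα : 0 < α) :
    ∀ N : ℕ, 1 ≤ N →
      0 < sigma1 n ξ₁ ξ₂ α (N + 1) ∧ sigma1 n ξ₁ ξ₂ α (N + 1) < sigma1 n ξ₁ ξ₂ α N := by
  intro N hN1
  have hN : 0 < N := hN1
  have hN' : 0 < N + 1 := by omega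
  constructor
  · rw [SDAux.sigma1_eq_lamin n ξ₁ ξ₂ α hN']
    exact SDAux.lamin_pos n ξ₁ ξ₂ α hn hξ hξ₂ hα hN'
  · rw [SDAux.sigma1_eq_lamin n ξ₁ ξ₂ α hN', SDAux.sigma1_eq_lamin n ξ₁ ξ₂ α hN]
    obtain ⟨v, hv, heig⟩ :=
      SDAux.lamin_mem (secMat n ξ₁ ξ₂ α N) (SDAux.secMat_herm n ξ₁ ξ₂ α) hN
    set μ := SDAux.lamin (secMat n ξ₁ ξ₂ α N) (SDAux.secMat_herm n ξ₁ ξ₂ α) hN with hμ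
    have hNlt : N - 1 < N := by omega
    have hlast := SDAux.last_ne_zero n ξ₁ ξ₂ α hn hξ hα hN μ v hv heig hNlt
    have hoffneg := SDAux.offd_neg n ξ₁ ξ₂ α hn hξ hα (N - 1)
    set q : ℝ := SDAux.offd n ξ₁ ξ₂ α (N - 1) * v ⟨N - 1, hNlt⟩ with hq_def
    have hq : q ≠ 0 := mul_ne_zero hoffneg.ne hlast
    set D : ℝ := SDAux.diagd n ξ₁ ξ₂ α N - μ with hD
    set δ : ℝ := 1 / (1 + |D|) with hδ_def
    have habs : (0:ℝ) ≤ |D| := abs_nonneg D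
    have hδ : 0 < δ := by rw [hδ_def]; positivity
    have hδ1 : δ * (1 + |D|) = 1 := by rw [hδ_def]; field_simp
    set t : ℝ := -q * δ with ht
    set u : ℕ → ℝ :=
      (fun m => if h : m < N then v ⟨m, h⟩ else (if m = N then t else 0)) with hu_def
    have huv : ∀ (a : ℕ) (ha : a < N), u a = v ⟨a, ha⟩ := by
      intro a ha; simp only [hu_def]; rw [dif_pos ha]
    have hveq : (fun j : Fin N => u (j : ℕ)) = v := by
      funext j; rw [huv (j : ℕ) j.isLt, Fin.eta]
    have huN : u N = t := by
      simp only [hu_def]; rw [dif_neg (by omega)]; simp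
    have huN1 : u (N - 1) = v ⟨N - 1, hNlt⟩ := huv (N - 1) hNlt
    have hQ := SDAux.quad_extend n ξ₁ ξ₂ α hn hξ hα hN u
    have hW := SDAux.dot_extend (N := N) u
    rw [hveq, huN, huN1, ← hq_def] at hQ
    rw [hveq, huN] at hW
    have hAv : dotProduct v ((secMat n ξ₁ ξ₂ α N).mulVec v) = μ * (dotProduct v v) := by
      rw [heig, dotProduct_smul]; rfl
    have hvv : 0 < dotProduct v v := SDAux.dot_self_pos hv
    have hdiagD : SDAux.diagd n ξ₁ ξ₂ α N = D + μ := by rw [hD]; ring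
    have hkey : dotProduct (fun j : Fin (N+1) => u (j : ℕ))
        ((secMat n ξ₁ ξ₂ α (N+1)).mulVec (fun j : Fin (N+1) => u (j : ℕ)))
        < μ * (dotProduct (fun j : Fin (N+1) => u (j : ℕ))
            (fun j : Fin (N+1) => u (j : ℕ))) := by
      rw [hQ, hW, hAv, hdiagD]
      have hDle : D ≤ |D| := le_abs_self D
      have hq2 : (0:ℝ) < q ^ 2 := by positivity
      have hE : -2 * (q ^ 2 * δ) + (q ^ 2 * δ ^ 2) * D < 0 := by
        nlinarith [mul_pos hq2 hδ,
          mul_nonneg (mul_nonneg hq2.le (mul_pos hδ hδ).le) (sub_nonneg.2 hDle),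
          mul_pos (mul_pos hq2 hδ) hδ]
      rw [ht]
      nlinarith [hE]
    have hlam' := SDAux.lamin_le_quad (secMat n ξ₁ ξ₂ α (N+1))
      (SDAux.secMat_herm n ξ₁ ξ₂ α) hN' (fun j : Fin (N+1) => u (j : ℕ))
    have hww : 0 < dotProduct (fun j : Fin (N+1) => u (j : ℕ))
        (fun j : Fin (N+1) => u (j : ℕ)) := by
      rw [hW]
      nlinarith [hvv, sq_nonneg t]
    exact lt_of_mul_lt_mul_right (lt_of_le_of_lt hlam' hkey) hww.le
end
end

section
/- (Harmonicity and inner Dirichlet condition of the basis functions) For every integer k ≥ 0, the function u_k is harmonic in Ω and vanishes identically on Γ_D = ∂B₁. -/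
noncomputable section

open Real Filter MeasureTheory Metric

namespace SDAux
open SD
open scoped RealInnerProductSpace ContDiff Topology

lemma infty_succ_le : (∞ + 1 : WithTop ℕ∞) ≤ ∞ := le_of_eq (by rfl)

lemma one_le_infty : (1 : WithTop ℕ∞) ≤ ∞ := by
  exact_mod_cast (le_top : (1:ℕ∞) ≤ ⊤)

lemma two_le_infty : (2 : WithTop ℕ∞) ≤ ∞ := by
  have : ((2:ℕ∞) : WithTop ℕ∞) ≤ ((⊤:ℕ∞) : WithTop ℕ∞) := WithTop.coe_le_coe.2 le_top
  simpa using this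

lemma cdat_fderiv_apply {X : Type*} [NormedAddCommGroup X] [NormedSpace ℝ X]
    {f : X → ℝ} {x : X} (hf : ContDiffAt ℝ ∞ f x) (v : X) :
    ContDiffAt ℝ ∞ (fun y => fderiv ℝ f y v) x := by
  have h1 : ContDiffAt ℝ ∞ (fderiv ℝ f) x := hf.fderiv_right infty_succ_le
  exact (ContinuousLinearMap.apply ℝ ℝ v).contDiff.comp_contDiffAt x h1

lemma fderiv_fderiv_apply {X : Type*} [NormedAddCommGroup X] [NormedSpace ℝ X]
    {f : X → ℝ} {x : X} (h : DifferentiableAt ℝ (fderiv ℝ f) x) (v w : X) :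
    fderiv ℝ (fun y => fderiv ℝ f y w) x v = fderiv ℝ (fderiv ℝ f) x v w := by
  have h2 : HasFDerivAt (fun y => (ContinuousLinearMap.apply ℝ ℝ w) (fderiv ℝ f y))
      ((ContinuousLinearMap.apply ℝ ℝ w).comp (fderiv ℝ (fderiv ℝ f) x)) x :=
    (ContinuousLinearMap.apply ℝ ℝ w).hasFDerivAt.comp x h.hasFDerivAt
  have h3 := h2.fderiv
  calc fderiv ℝ (fun y => fderiv ℝ f y w) x v
      = ((ContinuousLinearMap.apply ℝ ℝ w).comp (fderiv ℝ (fderiv ℝ f) x)) v := by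
        rw [← h3]; rfl
    _ = fderiv ℝ (fderiv ℝ f) x v w := rfl

lemma swap_second {X : Type*} [NormedAddCommGroup X] [NormedSpace ℝ X]
    {f : X → ℝ} {U : Set X} (hU : IsOpen U) (hf : ∀ y ∈ U, ContDiffAt ℝ ∞ f y)
    {x : X} (hx : x ∈ U) (v w : X) :
    fderiv ℝ (fun y => fderiv ℝ f y w) x v = fderiv ℝ (fun y => fderiv ℝ f y v) x w := by
  have hdiff : DifferentiableAt ℝ (fderiv ℝ f) x :=
    ((hf x hx).fderiv_right infty_succ_le).differentiableAt (by simp)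
  have hev : ∀ᶠ y in 𝓝 x, HasFDerivAt f (fderiv ℝ f y) y := by
    filter_upwards [hU.mem_nhds hx] with y hy
    exact ((hf y hy).differentiableAt (by simp)).hasFDerivAt
  have hsym := second_derivative_symmetric_of_eventually hev hdiff.hasFDerivAt v w
  rw [fderiv_fderiv_apply hdiff v w, fderiv_fderiv_apply hdiff w v]
  exact hsym

section LapBasic
variable {n : ℕ}

lemma lap_congr {f g : Pt n → ℝ} {x : Pt n} (h : f =ᶠ[𝓝 x] g) : lap n f x = lap n g x := by
  unfold SD.lap
  refine Finset.sum_congr rfl fun i _ => ?_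
  have h1 : (fun y => fderiv ℝ f y (EuclideanSpace.single i 1)) =ᶠ[𝓝 x]
      (fun y => fderiv ℝ g y (EuclideanSpace.single i 1)) := by
    filter_upwards [h.eventuallyEq_nhds] with y hy
    rw [hy.fderiv_eq]
  rw [h1.fderiv_eq]

lemma lap_const_mul {f : Pt n → ℝ} {U : Set (Pt n)} (hU : IsOpen U)
    (hf : ∀ y ∈ U, ContDiffAt ℝ ∞ f y) {x : Pt n} (hx : x ∈ U) (a : ℝ) :
    lap n (fun y => a * f y) x = a * lap n f x := by
  unfold SD.lap
  rw [Finset.mul_sum]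
  refine Finset.sum_congr rfl fun i _ => ?_
  have h1 : (fun y => fderiv ℝ (fun z => a * f z) y (EuclideanSpace.single i 1)) =ᶠ[𝓝 x]
      (fun y => a * fderiv ℝ f y (EuclideanSpace.single i 1)) := by
    filter_upwards [hU.mem_nhds hx] with y hy
    rw [fderiv_const_mul ((hf y hy).differentiableAt (by simp))]
    simp
  rw [h1.fderiv_eq]
  have hdf : DifferentiableAt ℝ (fun y => fderiv ℝ f y (EuclideanSpace.single i 1)) x :=
    (cdat_fderiv_apply (hf x hx) _).differentiableAt (by simp)
  rw [fderiv_const_mul hdf]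
  simp

lemma lap_combo {f g : Pt n → ℝ} {U : Set (Pt n)} (hU : IsOpen U)
    (hf : ∀ y ∈ U, ContDiffAt ℝ ∞ f y) (hg : ∀ y ∈ U, ContDiffAt ℝ ∞ g y)
    {x : Pt n} (hx : x ∈ U) (a b : ℝ) :
    lap n (fun y => a * f y + b * g y) x = a * lap n f x + b * lap n g x := by
  unfold SD.lap
  rw [Finset.mul_sum, Finset.mul_sum, ← Finset.sum_add_distrib]
  refine Finset.sum_congr rfl fun i _ => ?_
  have h1 : (fun y => fderiv ℝ (fun z => a * f z + b * g z) y (EuclideanSpace.single i 1))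
      =ᶠ[𝓝 x] (fun y => a * fderiv ℝ f y (EuclideanSpace.single i 1)
          + b * fderiv ℝ g y (EuclideanSpace.single i 1)) := by
    filter_upwards [hU.mem_nhds hx] with y hy
    have hfy := (hf y hy).differentiableAt (by simp)
    have hgy := (hg y hy).differentiableAt (by simp)
    rw [fderiv_fun_add (hfy.const_mul a) (hgy.const_mul b), fderiv_const_mul hfy,
      fderiv_const_mul hgy]
    simp
  rw [h1.fderiv_eq]
  have hdf : DifferentiableAt ℝ (fun y => fderiv ℝ f y (EuclideanSpace.single i 1)) x :=
    (cdat_fderiv_apply (hf x hx) _).differentiableAt (by simp)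
  have hdg : DifferentiableAt ℝ (fun y => fderiv ℝ g y (EuclideanSpace.single i 1)) x :=
    (cdat_fderiv_apply (hg x hx) _).differentiableAt (by simp)
  rw [fderiv_fun_add (hdf.const_mul a) (hdg.const_mul b), fderiv_const_mul hdf,
    fderiv_const_mul hdg]
  simp

end LapBasic

section Swap
variable {n : ℕ}

/-- Derivative in the `t` (parameter) direction. -/
def Dt (G : ℝ × Pt n → ℝ) : ℝ × Pt n → ℝ := fun p => fderiv ℝ G p (1, 0)

/-- Derivative in a spatial direction `v`. -/
def Dv (v : Pt n) (G : ℝ × Pt n → ℝ) : ℝ × Pt n → ℝ := fun p => fderiv ℝ G p (0, v)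

lemma Dt_smooth {G : ℝ × Pt n → ℝ} {U : Set (ℝ × Pt n)}
    (hG : ∀ q ∈ U, ContDiffAt ℝ ∞ G q) : ∀ q ∈ U, ContDiffAt ℝ ∞ (Dt G) q :=
  fun q hq => cdat_fderiv_apply (hG q hq) _

lemma Dv_smooth {G : ℝ × Pt n → ℝ} {U : Set (ℝ × Pt n)} (v : Pt n)
    (hG : ∀ q ∈ U, ContDiffAt ℝ ∞ G q) : ∀ q ∈ U, ContDiffAt ℝ ∞ (Dv v G) q :=
  fun q hq => cdat_fderiv_apply (hG q hq) _

lemma DtIter_smooth {G : ℝ × Pt n → ℝ} {U : Set (ℝ × Pt n)}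
    (hG : ∀ q ∈ U, ContDiffAt ℝ ∞ G q) :
    ∀ k, ∀ q ∈ U, ContDiffAt ℝ ∞ (Dt^[k] G) q := by
  intro k
  induction k with
  | zero => simpa using hG
  | succ k ih =>
    intro q hq
    rw [Function.iterate_succ_apply']
    exact Dt_smooth ih q hq

lemma slice_fderiv {G : ℝ × Pt n → ℝ} {t : ℝ} {x : Pt n}
    (h : DifferentiableAt ℝ G (t, x)) (v : Pt n) :
    fderiv ℝ (fun y => G (t, y)) x v = fderiv ℝ G (t, x) (0, v) := by
  have hι : HasFDerivAt (fun y : Pt n => (t, y))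
      ((0 : Pt n →L[ℝ] ℝ).prod (ContinuousLinearMap.id ℝ (Pt n))) x :=
    (hasFDerivAt_const t x).prodMk (hasFDerivAt_id x)
  have h2 := (h.hasFDerivAt.comp x hι).fderiv
  have h3 : fderiv ℝ (fun y : Pt n => G (t, y)) x
      = (fderiv ℝ G (t, x)).comp ((0 : Pt n →L[ℝ] ℝ).prod (ContinuousLinearMap.id ℝ (Pt n))) := h2
  rw [h3]
  rfl

lemma slice_hasDerivAt {G : ℝ × Pt n → ℝ} {q : ℝ × Pt n}
    (h : DifferentiableAt ℝ G q) :
    HasDerivAt (fun s => G (s, q.2)) (fderiv ℝ G q (1, 0)) q.1 := by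
  have hc : HasDerivAt (fun s : ℝ => (s, q.2)) ((1 : ℝ), (0 : Pt n)) q.1 :=
    (hasDerivAt_id q.1).prodMk (hasDerivAt_const q.1 q.2)
  have h2 := h.hasFDerivAt.comp_hasDerivAt q.1 (by simpa using hc)
  simpa [Function.comp_def] using h2

lemma DtIter_slice {G : ℝ × Pt n → ℝ} {U : Set (ℝ × Pt n)} (hU : IsOpen U)
    (hG : ∀ q ∈ U, ContDiffAt ℝ ∞ G q) :
    ∀ k, ∀ q ∈ U, (Dt^[k] G) q = iteratedDeriv k (fun t => G (t, q.2)) q.1 := by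
  intro k
  induction k with
  | zero => intro q hq; simp
  | succ k ih =>
    intro q hq
    rw [Function.iterate_succ_apply', iteratedDeriv_succ]
    have hsm := DtIter_smooth hG k
    have hdiff : DifferentiableAt ℝ (Dt^[k] G) q :=
      (hsm q hq).differentiableAt (by simp)
    have hderiv := slice_hasDerivAt hdiff
    have hopen : IsOpen {s : ℝ | (s, q.2) ∈ U} :=
      hU.preimage (continuous_id.prodMk continuous_const)
    have hmem : q.1 ∈ {s : ℝ | (s, q.2) ∈ U} := by simpa using hq
    have hev : (fun s => (Dt^[k] G) (s, q.2))
        =ᶠ[𝓝 q.1] (fun s => iteratedDeriv k (fun t => G (t, q.2)) s) := by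
      filter_upwards [hopen.mem_nhds hmem] with s hs
      exact ih (s, q.2) hs
    have h1 : Dt (Dt^[k] G) q = deriv (fun s => (Dt^[k] G) (s, q.2)) q.1 := hderiv.deriv.symm
    rw [h1, hev.deriv_eq]

lemma lap_slice {G : ℝ × Pt n → ℝ} {U : Set (ℝ × Pt n)} (hU : IsOpen U)
    (hG : ∀ q ∈ U, ContDiffAt ℝ ∞ G q) {p : ℝ × Pt n} (hp : p ∈ U) :
    lap n (fun x => G (p.1, x)) p.2
      = ∑ i : Fin (n + 2),
          Dv (EuclideanSpace.single i 1) (Dv (EuclideanSpace.single i 1) G) p := by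
  unfold SD.lap
  refine Finset.sum_congr rfl fun i _ => ?_
  have hopen : IsOpen {y : Pt n | (p.1, y) ∈ U} :=
    hU.preimage (continuous_const.prodMk continuous_id)
  have hmem : p.2 ∈ {y : Pt n | (p.1, y) ∈ U} := by simpa using hp
  have hev : (fun y => fderiv ℝ (fun x => G (p.1, x)) y (EuclideanSpace.single i 1))
      =ᶠ[𝓝 p.2] (fun y => Dv (EuclideanSpace.single i 1) G (p.1, y)) := by
    filter_upwards [hopen.mem_nhds hmem] with y hy
    exact slice_fderiv ((hG (p.1, y) hy).differentiableAt (by simp)) _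
  rw [hev.fderiv_eq]
  have h2 : DifferentiableAt ℝ (Dv (EuclideanSpace.single i 1) G) (p.1, p.2) :=
    ((Dv_smooth _ hG) (p.1, p.2) (by simpa using hp)).differentiableAt (by simp)
  have := slice_fderiv h2 (EuclideanSpace.single i 1)
  rw [this]
  rfl

lemma harm_iter {G : ℝ × Pt n → ℝ} {U : Set (ℝ × Pt n)} (hU : IsOpen U)
    (hG : ∀ q ∈ U, ContDiffAt ℝ ∞ G q)
    (hharm : ∀ q ∈ U, (∑ i : Fin (n + 2),
        Dv (EuclideanSpace.single i 1) (Dv (EuclideanSpace.single i 1) G) q) = 0) :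
    ∀ k, ∀ q ∈ U, (∑ i : Fin (n + 2),
        Dv (EuclideanSpace.single i 1) (Dv (EuclideanSpace.single i 1) (Dt^[k] G)) q) = 0 := by
  intro k
  induction k with
  | zero => simpa using hharm
  | succ k ih =>
    intro q hq
    have hH : ∀ r ∈ U, ContDiffAt ℝ ∞ (Dt^[k] G) r := DtIter_smooth hG k
    rw [Function.iterate_succ_apply']
    have hterm : ∀ i : Fin (n + 2),
        Dv (EuclideanSpace.single i 1) (Dv (EuclideanSpace.single i 1) (Dt (Dt^[k] G))) q
          = Dt (Dv (EuclideanSpace.single i 1) (Dv (EuclideanSpace.single i 1) (Dt^[k] G))) q := by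
      intro i
      set e : Pt n := EuclideanSpace.single i 1 with he
      have hswap1 : ∀ r ∈ U, Dv e (Dt (Dt^[k] G)) r = Dt (Dv e (Dt^[k] G)) r := fun r hr =>
        swap_second hU hH hr (0, e) (1, 0)
      have hev : Dv e (Dt (Dt^[k] G)) =ᶠ[𝓝 q] Dt (Dv e (Dt^[k] G)) := by
        filter_upwards [hU.mem_nhds hq] with r hr
        exact hswap1 r hr
      have h1 : Dv e (Dv e (Dt (Dt^[k] G))) q = Dv e (Dt (Dv e (Dt^[k] G))) q :=
        congrArg (fun L : (ℝ × Pt n) →L[ℝ] ℝ => L (0, e)) hev.fderiv_eq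
      rw [h1]
      exact swap_second hU (Dv_smooth e hH) hq (0, e) (1, 0)
    rw [Finset.sum_congr rfl (fun i _ => hterm i)]
    set K : Fin (n + 2) → (ℝ × Pt n → ℝ) := fun i =>
      Dv (EuclideanSpace.single i 1) (Dv (EuclideanSpace.single i 1) (Dt^[k] G)) with hK
    have hKdiff : ∀ i : Fin (n + 2), DifferentiableAt ℝ (K i) q := fun i =>
      ((Dv_smooth _ (Dv_smooth _ hH)) q hq).differentiableAt (by simp)
    have hsum : HasFDerivAt (fun p => ∑ i : Fin (n + 2), K i p)
        (∑ i : Fin (n + 2), fderiv ℝ (K i) q) q :=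
      HasFDerivAt.fun_sum fun i _ => (hKdiff i).hasFDerivAt
    have h0 : (fun p => ∑ i : Fin (n + 2), K i p) =ᶠ[𝓝 q] (fun _ => (0 : ℝ)) := by
      filter_upwards [hU.mem_nhds hq] with r hr
      exact ih r hr
    calc (∑ i : Fin (n + 2), Dt (K i) q)
        = (∑ i : Fin (n + 2), fderiv ℝ (K i) q) (1, 0) := by
          rw [ContinuousLinearMap.sum_apply]
          rfl
      _ = fderiv ℝ (fun p => ∑ i : Fin (n + 2), K i p) q (1, 0) := by rw [hsum.fderiv]
      _ = fderiv ℝ (fun _ : ℝ × Pt n => (0 : ℝ)) q (1, 0) := by rw [h0.fderiv_eq]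
      _ = 0 := by rw [fderiv_fun_const]; rfl

lemma lap_iter_slice_zero {G : ℝ × Pt n → ℝ} {U : Set (ℝ × Pt n)} (hU : IsOpen U)
    (hG : ∀ q ∈ U, ContDiffAt ℝ ∞ G q)
    (hharm : ∀ q ∈ U, (∑ i : Fin (n + 2),
        Dv (EuclideanSpace.single i 1) (Dv (EuclideanSpace.single i 1) G) q) = 0)
    {x₀ : Pt n} (h0 : ((0 : ℝ), x₀) ∈ U) (k : ℕ) :
    lap n (fun x => iteratedDeriv k (fun t => G (t, x)) 0) x₀ = 0 := by
  have hiter : ∀ q ∈ U, ContDiffAt ℝ ∞ (Dt^[k] G) q := DtIter_smooth hG k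
  have hopen : IsOpen {y : Pt n | ((0 : ℝ), y) ∈ U} :=
    hU.preimage (continuous_const.prodMk continuous_id)
  have hev : (fun x => iteratedDeriv k (fun t => G (t, x)) 0)
      =ᶠ[𝓝 x₀] (fun x => (Dt^[k] G) (0, x)) := by
    filter_upwards [hopen.mem_nhds h0] with y hy
    exact (DtIter_slice hU hG k (0, y) hy).symm
  rw [lap_congr hev]
  have h1 := lap_slice hU hiter h0
  rw [h1]
  exact harm_iter hU hG hharm k (0, x₀) h0

/-- Smoothness of the slice `x ↦ iteratedDeriv k (t ↦ G (t,x)) 0`. -/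
lemma iter_slice_smoothAt {G : ℝ × Pt n → ℝ} {U : Set (ℝ × Pt n)} (hU : IsOpen U)
    (hG : ∀ q ∈ U, ContDiffAt ℝ ∞ G q) {x₀ : Pt n} (h0 : ((0 : ℝ), x₀) ∈ U) (k : ℕ) :
    ContDiffAt ℝ ∞ (fun x => iteratedDeriv k (fun t => G (t, x)) 0) x₀ := by
  have hopen : IsOpen {y : Pt n | ((0 : ℝ), y) ∈ U} :=
    hU.preimage (continuous_const.prodMk continuous_id)
  have hev : (fun x => (Dt^[k] G) (0, x))
      =ᶠ[𝓝 x₀] (fun x => iteratedDeriv k (fun t => G (t, x)) 0) := by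
    filter_upwards [hopen.mem_nhds h0] with y hy
    exact DtIter_slice hU hG k (0, y) hy
  refine ContDiffAt.congr_of_eventuallyEq ?_ hev.symm
  exact (DtIter_smooth hG k _ h0).comp x₀ (contDiffAt_const.prodMk contDiffAt_id)

end Swap

section Core
variable {n : ℕ}

lemma inner_single (v : Pt n) (i : Fin (n + 2)) :
    ⟪v, EuclideanSpace.single i 1⟫ = v i := by
  rw [real_inner_comm]
  simp [EuclideanSpace.inner_single_left]

lemma sum_coord_sq (v : Pt n) : (∑ i : Fin (n + 2), v i ^ 2) = ‖v‖ ^ 2 := by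
  have h := real_inner_self_eq_norm_sq v
  rw [← h, PiLp.inner_apply]
  refine Finset.sum_congr rfl fun i _ => ?_
  simp [sq]

lemma hasFDerivAt_normsq (c y : Pt n) :
    HasFDerivAt (fun z => ‖z - c‖ ^ 2) ((2 : ℝ) • (innerSL ℝ (y - c))) y := by
  have h := ((hasFDerivAt_id y).sub_const c).norm_sq
  refine h.congr_fderiv ?_
  ext v
  simp [two_smul]

lemma normsq_pos (c : Pt n) {y : Pt n} (hy : y ≠ c) : 0 < ‖y - c‖ ^ 2 := by
  have h : y - c ≠ 0 := sub_ne_zero.2 hy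
  exact pow_pos (norm_pos_iff.mpr h) 2

lemma hasFDerivAt_normsq_rpow (c : Pt n) {y : Pt n} (hy : y ≠ c) (e : ℝ) :
    HasFDerivAt (fun z => (‖z - c‖ ^ 2 : ℝ) ^ e)
      ((e * (‖y - c‖ ^ 2 : ℝ) ^ (e - 1) * 2) • innerSL ℝ (y - c)) y := by
  have h1 := (Real.hasDerivAt_rpow_const (x := ‖y - c‖ ^ 2) (p := e)
    (Or.inl (normsq_pos c hy).ne')).comp_hasFDerivAt y (hasFDerivAt_normsq c y)
  rw [smul_smul] at h1
  exact h1

lemma normsq_rpow_smoothAt (c : Pt n) {x : Pt n} (hx : x ≠ c) (e : ℝ) :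
    ContDiffAt ℝ ∞ (fun y => (‖y - c‖ ^ 2 : ℝ) ^ e) x := by
  have hN : ContDiffAt ℝ ∞ (fun y : Pt n => ‖y - c‖ ^ 2) x := by
    have : ContDiffAt ℝ ∞ (fun y : Pt n => y - c) x := contDiffAt_id.sub contDiffAt_const
    exact this.norm_sq ℝ
  exact hN.rpow_const_of_ne (normsq_pos c hx).ne'

lemma lap_normsq_rpow (c : Pt n) {x : Pt n} (hx : x ≠ c) (e : ℝ)
    (he : 2 * e + (n : ℝ) = 0) :
    lap n (fun y => (‖y - c‖ ^ 2 : ℝ) ^ e) x = 0 := by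
  set N : Pt n → ℝ := fun y => ‖y - c‖ ^ 2 with hN
  have hNx : 0 < N x := normsq_pos c hx
  unfold SD.lap
  have step : ∀ i : Fin (n + 2),
      fderiv ℝ (fun y => fderiv ℝ (fun z => N z ^ e) y (EuclideanSpace.single i 1)) x
          (EuclideanSpace.single i 1)
        = 2 * e * N x ^ (e - 1) + 4 * e * (e - 1) * N x ^ (e - 2) * ((x - c) i) ^ 2 := by
    intro i
    set ei : Pt n := EuclideanSpace.single i 1 with hei
    have hev : (fun y => fderiv ℝ (fun z => N z ^ e) y ei)
        =ᶠ[𝓝 x] (fun y => 2 * e * N y ^ (e - 1) * ⟪y - c, ei⟫) := by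
      filter_upwards [isOpen_ne.mem_nhds hx] with y hy
      rw [(hasFDerivAt_normsq_rpow c hy e).fderiv]
      simp only [ContinuousLinearMap.coe_smul', Pi.smul_apply, innerSL_apply_apply, smul_eq_mul]
      ring
    rw [hev.fderiv_eq]
    -- derivative of the explicit product
    have h2 : HasFDerivAt (fun y => (2 * e) * N y ^ (e - 1))
        ((2 * e) • (((e - 1) * N x ^ (e - 1 - 1) * 2) • innerSL ℝ (x - c))) x :=
      (hasFDerivAt_normsq_rpow c hx (e - 1)).const_mul (2 * e)
    have h3 : HasFDerivAt (fun y : Pt n => ⟪y - c, ei⟫)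
        ((fderivInnerCLM ℝ (x - c, ei)).comp
          ((ContinuousLinearMap.id ℝ (Pt n)).prod (0 : Pt n →L[ℝ] Pt n))) x := by
      have ha : HasFDerivAt (fun y : Pt n => y - c) (ContinuousLinearMap.id ℝ (Pt n)) x :=
        (hasFDerivAt_id x).sub_const c
      have hb : HasFDerivAt (fun _ : Pt n => ei) (0 : Pt n →L[ℝ] Pt n) x :=
        hasFDerivAt_const ei x
      exact ha.inner ℝ hb
    have h4 := (h2.fun_mul h3).fderiv
    rw [h4]
    simp only [ContinuousLinearMap.add_apply, ContinuousLinearMap.coe_smul', Pi.smul_apply,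
      ContinuousLinearMap.comp_apply, ContinuousLinearMap.prod_apply,
      ContinuousLinearMap.coe_id', id_eq, ContinuousLinearMap.zero_apply,
      fderivInnerCLM_apply, innerSL_apply_apply, smul_eq_mul]
    have hii : ⟪ei, ei⟫ = 1 := by
      rw [hei, inner_single]
      simp [EuclideanSpace.single_apply]
    have hxi : ⟪x - c, ei⟫ = (x - c) i := inner_single _ i
    rw [inner_zero_right]
    rw [hii, hxi]
    rw [show e - 1 - 1 = e - 2 by ring]
    ring
  rw [Finset.sum_congr rfl fun i _ => step i]
  rw [Finset.sum_add_distrib, Finset.sum_const, ← Finset.mul_sum, sum_coord_sq]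
  have hsplit : N x ^ (e - 2) * ‖x - c‖ ^ 2 = N x ^ (e - 1) := by
    have h1 : N x ^ (e - 2) * N x = N x ^ (e - 2 + 1) := (Real.rpow_add_one hNx.ne' (e - 2)).symm
    have h2 : N x = ‖x - c‖ ^ 2 := rfl
    rw [← h2, h1, show e - 2 + 1 = e - 1 by ring]
  calc Finset.univ.card • (2 * e * N x ^ (e - 1))
        + 4 * e * (e - 1) * N x ^ (e - 2) * ‖x - c‖ ^ 2
      = ((Finset.univ.card : ℕ) : ℝ) * (2 * e * N x ^ (e - 1))
        + 4 * e * (e - 1) * (N x ^ (e - 2) * ‖x - c‖ ^ 2) := by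
        rw [nsmul_eq_mul]; ring
    _ = ((n : ℝ) + 2) * (2 * e * N x ^ (e - 1))
        + 4 * e * (e - 1) * N x ^ (e - 1) := by
        rw [hsplit]
        norm_num
    _ = 2 * e * (2 * e + (n : ℝ)) * N x ^ (e - 1) := by ring
    _ = 0 := by rw [he]; ring

end Core

section OneD

lemma deriv_smoothAt {f : ℝ → ℝ} {O : Set ℝ} (hO : IsOpen O)
    (hf : ∀ u ∈ O, ContDiffAt ℝ ∞ f u) : ∀ u ∈ O, ContDiffAt ℝ ∞ (deriv f) u := by
  intro u hu
  have h := cdat_fderiv_apply (hf u hu) (1 : ℝ)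
  have he : deriv f = fun t => fderiv ℝ f t 1 := by
    funext t; exact (fderiv_apply_one_eq_deriv).symm
  rw [he]
  exact h

lemma iteratedDeriv_smoothAt {f : ℝ → ℝ} {O : Set ℝ} (hO : IsOpen O)
    (hf : ∀ u ∈ O, ContDiffAt ℝ ∞ f u) :
    ∀ k, ∀ u ∈ O, ContDiffAt ℝ ∞ (iteratedDeriv k f) u := by
  intro k
  induction k with
  | zero => simpa [iteratedDeriv_zero] using hf
  | succ k ih =>
    intro u hu
    rw [iteratedDeriv_succ]
    exact deriv_smoothAt hO ih u hu

lemma hasDerivAt_iteratedDeriv {f : ℝ → ℝ} {O : Set ℝ} (hO : IsOpen O)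
    (hf : ∀ u ∈ O, ContDiffAt ℝ ∞ f u) (k : ℕ) {u : ℝ} (hu : u ∈ O) :
    HasDerivAt (iteratedDeriv k f) (iteratedDeriv (k + 1) f u) u := by
  have hd : DifferentiableAt ℝ (iteratedDeriv k f) u :=
    (iteratedDeriv_smoothAt hO hf k u hu).differentiableAt (by simp)
  have h := hd.hasDerivAt
  rwa [← iteratedDeriv_succ] at h

lemma iteratedDeriv_const_mul'' {f : ℝ → ℝ} {O : Set ℝ} (hO : IsOpen O)
    (hf : ∀ u ∈ O, ContDiffAt ℝ ∞ f u) (C : ℝ) :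
    ∀ k, ∀ u ∈ O, iteratedDeriv k (fun w => C * f w) u = C * iteratedDeriv k f u := by
  intro k
  induction k with
  | zero => intro u hu; simp
  | succ k ih =>
    intro u hu
    rw [iteratedDeriv_succ, iteratedDeriv_succ]
    have hev : iteratedDeriv k (fun w => C * f w) =ᶠ[𝓝 u]
        (fun w => C * iteratedDeriv k f w) := by
      filter_upwards [hO.mem_nhds hu] with w hw using ih w hw
    rw [hev.deriv_eq]
    have hd : DifferentiableAt ℝ (iteratedDeriv k f) u :=
      (iteratedDeriv_smoothAt hO hf k u hu).differentiableAt (by simp)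
    rw [deriv_const_mul C hd]

lemma iteratedDeriv_add'' {f g : ℝ → ℝ} {O : Set ℝ} (hO : IsOpen O)
    (hf : ∀ u ∈ O, ContDiffAt ℝ ∞ f u) (hg : ∀ u ∈ O, ContDiffAt ℝ ∞ g u) :
    ∀ k, ∀ u ∈ O, iteratedDeriv k (fun w => f w + g w) u
      = iteratedDeriv k f u + iteratedDeriv k g u := by
  intro k
  induction k with
  | zero => intro u hu; simp
  | succ k ih =>
    intro u hu
    rw [iteratedDeriv_succ, iteratedDeriv_succ, iteratedDeriv_succ]
    have hev : iteratedDeriv k (fun w => f w + g w) =ᶠ[𝓝 u]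
        (fun w => iteratedDeriv k f w + iteratedDeriv k g w) := by
      filter_upwards [hO.mem_nhds hu] with w hw using ih w hw
    rw [hev.deriv_eq]
    exact deriv_fun_add ((iteratedDeriv_smoothAt hO hf k u hu).differentiableAt (by simp))
      ((iteratedDeriv_smoothAt hO hg k u hu).differentiableAt (by simp))

lemma iteratedDeriv_id_mul {f : ℝ → ℝ} {O : Set ℝ} (hO : IsOpen O)
    (hf : ∀ u ∈ O, ContDiffAt ℝ ∞ f u) :
    ∀ k, ∀ u ∈ O, iteratedDeriv k (fun w => w * f w) u
      = u * iteratedDeriv k f u + (k : ℝ) * iteratedDeriv (k - 1) f u := by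
  intro k
  induction k with
  | zero => intro u hu; simp
  | succ k ih =>
    intro u hu
    rw [iteratedDeriv_succ]
    have hev : iteratedDeriv k (fun w => w * f w) =ᶠ[𝓝 u]
        (fun w => w * iteratedDeriv k f w + (k : ℝ) * iteratedDeriv (k - 1) f w) := by
      filter_upwards [hO.mem_nhds hu] with w hw using ih w hw
    rw [hev.deriv_eq]
    have h1 : HasDerivAt (fun w => w * iteratedDeriv k f w)
        (iteratedDeriv k f u + u * iteratedDeriv (k + 1) f u) u := by
      have h := (hasDerivAt_id u).fun_mul (hasDerivAt_iteratedDeriv hO hf k hu)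
      simpa using h
    have h2 : HasDerivAt (fun w => (k : ℝ) * iteratedDeriv (k - 1) f w)
        ((k : ℝ) * iteratedDeriv k f u) u := by
      rcases Nat.eq_zero_or_pos k with hk | hk
      · subst hk
        simpa using (hasDerivAt_iteratedDeriv hO hf 0 hu).const_mul (0 : ℝ)
      · have hk1 : k - 1 + 1 = k := Nat.succ_pred_eq_of_pos hk
        have h := (hasDerivAt_iteratedDeriv hO hf (k - 1) hu).const_mul (k : ℝ)
        rwa [hk1] at h
    rw [(h1.fun_add h2).deriv]
    push_cast
    ring

lemma smooth_id_mul {f : ℝ → ℝ} {O : Set ℝ}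
    (hf : ∀ u ∈ O, ContDiffAt ℝ ∞ f u) :
    ∀ u ∈ O, ContDiffAt ℝ ∞ (fun w => w * f w) u :=
  fun u hu => contDiffAt_id.mul (hf u hu)

lemma smooth_const_mul {f : ℝ → ℝ} {O : Set ℝ}
    (hf : ∀ u ∈ O, ContDiffAt ℝ ∞ f u) (C : ℝ) :
    ∀ u ∈ O, ContDiffAt ℝ ∞ (fun w => C * f w) u :=
  fun u hu => contDiffAt_const.mul (hf u hu)

/-- Iterated derivative at `0` of `(a + b w + c w²)·f(w)`. -/
lemma iteratedDeriv_quad_mul {f : ℝ → ℝ} {O : Set ℝ} (hO : IsOpen O) (h0 : (0 : ℝ) ∈ O)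
    (hf : ∀ u ∈ O, ContDiffAt ℝ ∞ f u) (a b c : ℝ) (k : ℕ) :
    iteratedDeriv k (fun w => (a + b * w + c * w ^ 2) * f w) 0
      = a * iteratedDeriv k f 0 + b * (k : ℝ) * iteratedDeriv (k - 1) f 0
        + c * (k : ℝ) * ((k - 1 : ℕ) : ℝ) * iteratedDeriv (k - 2) f 0 := by
  have hfe : (fun w => (a + b * w + c * w ^ 2) * f w)
      = fun w => a * f w + (w * (b * f w) + w * (w * (c * f w))) := by
    funext w; ring
  rw [hfe]
  have hg1 := smooth_const_mul hf b
  have hg2 := smooth_const_mul hf c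
  have hg3 := smooth_id_mul hg2
  have haf := smooth_const_mul hf a
  have hw1 := smooth_id_mul hg1
  have hw3 := smooth_id_mul hg3
  have hsum2 : ∀ u ∈ O, ContDiffAt ℝ ∞ (fun w => w * (b * f w) + w * (w * (c * f w))) u :=
    fun u hu => (hw1 u hu).add (hw3 u hu)
  rw [iteratedDeriv_add'' hO haf hsum2 k 0 h0]
  rw [iteratedDeriv_const_mul'' hO hf a k 0 h0]
  rw [iteratedDeriv_add'' hO hw1 hw3 k 0 h0]
  rw [iteratedDeriv_id_mul hO hg1 k 0 h0]
  rw [iteratedDeriv_id_mul hO hg3 k 0 h0]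
  rw [iteratedDeriv_const_mul'' hO hf b (k - 1) 0 h0]
  rw [iteratedDeriv_id_mul hO hg2 (k - 1) 0 h0]
  rw [iteratedDeriv_const_mul'' hO hf c (k - 1 - 1) 0 h0]
  have hsub : k - 1 - 1 = k - 2 := by omega
  rw [hsub]
  ring

lemma iteratedDeriv_comp_const_mul' {f : ℝ → ℝ} {O : Set ℝ} (hO : IsOpen O)
    (hf : ∀ u ∈ O, ContDiffAt ℝ ∞ f u) (c : ℝ) :
    ∀ k, ∀ u : ℝ, c * u ∈ O →
      iteratedDeriv k (fun w => f (c * w)) u = c ^ k * iteratedDeriv k f (c * u) := by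
  intro k
  induction k with
  | zero => intro u hu; simp
  | succ k ih =>
    intro u hu
    rw [iteratedDeriv_succ]
    have hopen : IsOpen {w : ℝ | c * w ∈ O} :=
      hO.preimage (continuous_const.mul continuous_id)
    have hev : iteratedDeriv k (fun w => f (c * w)) =ᶠ[𝓝 u]
        (fun w => c ^ k * iteratedDeriv k f (c * w)) := by
      filter_upwards [hopen.mem_nhds hu] with w hw using ih w hw
    rw [hev.deriv_eq]
    have hmul : HasDerivAt (fun w : ℝ => c * w) c u := by
      simpa using (hasDerivAt_id u).const_mul c
    have h1 : HasDerivAt (fun w => iteratedDeriv k f (c * w))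
        (iteratedDeriv (k + 1) f (c * u) * c) u :=
      HasDerivAt.comp u (hasDerivAt_iteratedDeriv hO hf k hu) hmul
    rw [(h1.const_mul (c ^ k)).deriv]
    ring

end OneD

section Gegen

/-- Taylor coefficients at `0` of `(1 − 2 s u + u²)^(−n/2)` are `k! · G_k^{(n/2)}(s)`. -/
lemma gegen_taylor (n : ℕ) (s : ℝ) (k : ℕ) :
    iteratedDeriv k (fun u : ℝ => (1 - 2 * s * u + u ^ 2) ^ (-(n : ℝ) / 2)) 0
      = ((Nat.factorial k : ℕ) : ℝ) * gegen n k s := by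
  set e : ℝ := -(n : ℝ) / 2 with hedef
  set Q : ℝ → ℝ := fun u => 1 - 2 * s * u + u ^ 2 with hQdef
  set O : Set ℝ := {u | 0 < Q u} with hOdef
  have hQc : Continuous Q := by
    unfold Q; continuity
  have hO : IsOpen O := isOpen_lt continuous_const hQc
  have hQ0 : Q 0 = 1 := by unfold Q; norm_num
  have h0 : (0 : ℝ) ∈ O := by
    simp only [hOdef, Set.mem_setOf_eq, hQ0]; norm_num
  have hQsm : ContDiff ℝ ∞ Q := by
    unfold Q
    exact (contDiff_const.sub ((contDiff_const.mul contDiff_id))).add (contDiff_id.pow 2)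
  set gs : ℝ → ℝ := fun u => Q u ^ e with hgsdef
  have hgs : ∀ u ∈ O, ContDiffAt ℝ ∞ gs u := fun u hu =>
    (hQsm.contDiffAt).rpow_const_of_ne (ne_of_gt hu)
  have hQder : ∀ u : ℝ, HasDerivAt Q (2 * u - 2 * s) u := by
    intro u
    have h := ((hasDerivAt_const u (1 : ℝ)).fun_sub
      ((hasDerivAt_id u).const_mul (2 * s))).fun_add (hasDerivAt_pow 2 u)
    refine h.congr_deriv ?_
    ring
  have hder : ∀ u ∈ O, HasDerivAt gs (e * Q u ^ (e - 1) * (2 * u - 2 * s)) u := by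
    intro u hu
    exact HasDerivAt.comp u
      (Real.hasDerivAt_rpow_const (Or.inl (ne_of_gt hu))) (hQder u)
  set h : ℝ → ℝ := deriv gs with hhdef
  have hhval : ∀ u ∈ O, h u = e * Q u ^ (e - 1) * (2 * u - 2 * s) := fun u hu =>
    (hder u hu).deriv
  have hhsm : ∀ u ∈ O, ContDiffAt ℝ ∞ h u := deriv_smoothAt hO hgs
  have hkey : ∀ u ∈ O, Q u * h u = ((n : ℝ) * s - (n : ℝ) * u) * gs u := by
    intro u hu
    rw [hhval u hu]
    have hQe : Q u ^ e = Q u ^ (e - 1) * Q u := by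
      rw [← Real.rpow_add_one (ne_of_gt hu) (e - 1)]
      norm_num
    have : gs u = Q u ^ (e - 1) * Q u := by rw [hgsdef]; exact hQe
    rw [this, hedef]
    ring
  -- A j := iteratedDeriv j gs 0
  set A : ℕ → ℝ := fun j => iteratedDeriv j gs 0 with hAdef
  have hA0 : A 0 = 1 := by
    simp only [hAdef, iteratedDeriv_zero, hgsdef, hQ0, Real.one_rpow]
  have hIh : ∀ j : ℕ, iteratedDeriv j h 0 = A (j + 1) := by
    intro j
    show iteratedDeriv j h 0 = iteratedDeriv (j + 1) gs 0
    rw [iteratedDeriv_succ']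
  have hA1 : A 1 = (n : ℝ) * s := by
    have := hkey 0 h0
    rw [hQ0] at this
    have hgs0 : gs 0 = 1 := by
      show Q 0 ^ e = 1
      rw [hQ0, Real.one_rpow]
    rw [hgs0] at this
    have h1 : A 1 = h 0 := by
      rw [← hIh 0, iteratedDeriv_zero]
    rw [h1]
    linarith [this]
  -- the recursion
  have hrec : ∀ m : ℕ, A (m + 2) = (2 * ((m : ℝ) + 1) + n) * s * A (m + 1)
      - ((m : ℝ) + 1) * ((m : ℝ) + n) * A m := by
    intro m
    have hQh : (fun w => Q w * h w) =ᶠ[𝓝 (0 : ℝ)]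
        (fun w => ((n : ℝ) * s - (n : ℝ) * w) * gs w) := by
      filter_upwards [hO.mem_nhds h0] with w hw using hkey w hw
    have hL := hQh.iteratedDeriv_eq (m + 1)
    have hQform : (fun w => Q w * h w)
        = fun w => (1 + (-(2 * s)) * w + 1 * w ^ 2) * h w := by
      funext w; show Q w * h w = _; rw [hQdef]; ring
    have hRform : (fun w => ((n : ℝ) * s - (n : ℝ) * w) * gs w)
        = fun w => ((n : ℝ) * s + (-(n : ℝ)) * w + 0 * w ^ 2) * gs w := by
      funext w; ring
    rw [hQform, hRform] at hL
    rw [iteratedDeriv_quad_mul hO h0 hhsm _ _ _ (m + 1),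
      iteratedDeriv_quad_mul hO h0 hgs _ _ _ (m + 1)] at hL
    rw [hIh (m + 1), hIh (m + 1 - 1), hIh (m + 1 - 2)] at hL
    have hAj : ∀ j, iteratedDeriv j gs 0 = A j := fun _ => rfl
    simp only [hAj, Nat.add_sub_cancel] at hL
    rcases Nat.eq_zero_or_pos m with hm | hm
    · subst hm
      norm_num at hL ⊢
      linear_combination hL
    · have hm2 : m + 1 - 2 + 1 = m := by omega
      rw [hm2] at hL
      push_cast at hL ⊢
      linear_combination hL
  -- match with gegenAux
  have hmatch : ∀ m : ℕ, (gegenAux n m s).1 * ((Nat.factorial m : ℕ) : ℝ) = A m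
      ∧ (gegenAux n m s).2 * ((Nat.factorial (m+1) : ℕ) : ℝ) = A (m + 1) := by
    intro m
    induction m with
    | zero =>
      constructor
      · simp [gegenAux, hA0]
      · simp [gegenAux, hA1]
    | succ m ih =>
      obtain ⟨ih1, ih2⟩ := ih
      constructor
      · show (gegenAux n m s).2 * ((Nat.factorial (m+1) : ℕ) : ℝ) = A (m + 1)
        exact ih2
      · show ((2 * ((m : ℝ) + 2) + (n : ℝ) - 2) * s * (gegenAux n m s).2
          - (((m : ℝ) + 2) + (n : ℝ) - 2) * (gegenAux n m s).1) / ((m : ℝ) + 2)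
            * ((Nat.factorial (m+1+1) : ℕ) : ℝ) = A (m + 1 + 1)
        have hfac2 : ((Nat.factorial (m+1+1) : ℕ) : ℝ) = ((m : ℝ) + 2) * ((Nat.factorial (m+1) : ℕ) : ℝ) := by
          rw [Nat.factorial_succ]
          push_cast
          ring
        have hfac1 : ((Nat.factorial (m+1) : ℕ) : ℝ) = ((m : ℝ) + 1) * ((Nat.factorial m : ℕ) : ℝ) := by
          rw [Nat.factorial_succ]
          push_cast
          ring
        have hm2 : (m : ℝ) + 2 ≠ 0 := by positivity
        have hr := hrec m
        rw [show m + 1 + 1 = m + 2 from rfl, hr]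
        rw [hfac2]
        field_simp
        rw [← ih1, ← ih2]
        rw [hfac1]
        ring
  have hfin := (hmatch k).1
  have hAk : iteratedDeriv k gs 0 = A k := rfl
  show iteratedDeriv k gs 0 = ((Nat.factorial k : ℕ) : ℝ) * gegen n k s
  rw [hAk, ← hfin]
  unfold SD.gegen
  ring

end Gegen

section Bisph
variable {n : ℕ}

/-- `q(t,x) = ‖(1−t)x − α(1+t)e₁‖²`, so that `q(t,·)^{-n/2}` is a family of point potentials. -/
def qfun (n : ℕ) (α : ℝ) : ℝ × Pt n → ℝ :=
  fun p => ‖(1 - p.1) • p.2 - (α * (1 + p.1)) • e1 n‖ ^ 2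

def Ffun (n : ℕ) (α : ℝ) : ℝ × Pt n → ℝ := fun p => (qfun n α p) ^ (-(n : ℝ) / 2)

def Uset (n : ℕ) (α : ℝ) : Set (ℝ × Pt n) := {p | |p.1| < 1 ∧ 0 < qfun n α p}

/-- The mode function: `k`-th Taylor coefficient (times `k!`) of the generating family. -/
def Vfun (n : ℕ) (α : ℝ) (k : ℕ) : Pt n → ℝ :=
  fun x => iteratedDeriv k (fun t => Ffun n α (t, x)) 0

lemma e1_norm : ‖e1 n‖ = 1 := by
  unfold SD.e1
  rw [EuclideanSpace.norm_single]
  norm_num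

lemma qfun_smooth (α : ℝ) : ContDiff ℝ ∞ (qfun n α) := by
  have h : ContDiff ℝ ∞ (fun p : ℝ × Pt n =>
      (1 - p.1) • p.2 - (α * (1 + p.1)) • e1 n) := by
    exact ((contDiff_const.sub contDiff_fst).smul contDiff_snd).sub
      ((contDiff_const.mul (contDiff_const.add contDiff_fst)).smul contDiff_const)
  exact h.norm_sq ℝ

lemma Uset_open (α : ℝ) : IsOpen (Uset n α) := by
  have h1 : IsOpen {p : ℝ × Pt n | |p.1| < 1} :=
    isOpen_lt (continuous_fst.abs) continuous_const
  have h2 : IsOpen {p : ℝ × Pt n | 0 < qfun n α p} :=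
    isOpen_lt continuous_const (qfun_smooth α).continuous
  exact h1.inter h2

lemma Ffun_smooth (α : ℝ) : ∀ p ∈ Uset n α, ContDiffAt ℝ ∞ (Ffun n α) p :=
  fun p hp => ((qfun_smooth α).contDiffAt).rpow_const_of_ne (ne_of_gt hp.2)

lemma qfun_zero (α : ℝ) (x : Pt n) : qfun n α (0, x) = ‖x - α • e1 n‖ ^ 2 := by
  unfold qfun
  norm_num

lemma mem_Uset_zero (α : ℝ) {x : Pt n} (hx : rP n α x ≠ 0) : ((0 : ℝ), x) ∈ Uset n α := by
  constructor
  · show |(0:ℝ)| < 1; norm_num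
  · show 0 < qfun n α (0, x)
    rw [qfun_zero]
    have : (0:ℝ) ≤ ‖x - α • e1 n‖ := norm_nonneg _
    have h2 : ‖x - α • e1 n‖ ≠ 0 := hx
    positivity

/-- Each slice of the generating family is harmonic. -/
lemma Ffun_slice_harmonic (α : ℝ) : ∀ p ∈ Uset n α,
    (∑ i : Fin (n + 2),
      Dv (EuclideanSpace.single i 1) (Dv (EuclideanSpace.single i 1) (Ffun n α)) p) = 0 := by
  intro p hp
  rw [← lap_slice (Uset_open α) (Ffun_smooth α) hp]
  have ht1 : (1 : ℝ) - p.1 ≠ 0 := by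
    have := hp.1
    rw [abs_lt] at this
    linarith [this.2]
  set c : Pt n := ((α * (1 + p.1)) / (1 - p.1)) • e1 n with hc
  have hfactor : ∀ x : Pt n, (1 - p.1) • x - (α * (1 + p.1)) • e1 n = (1 - p.1) • (x - c) := by
    intro x
    rw [hc, smul_sub, smul_smul]
    rw [mul_div_cancel₀ _ ht1]
  have hslice : (fun x => Ffun n α (p.1, x))
      = fun x => ((1 - p.1) ^ 2) ^ (-(n : ℝ) / 2) * (‖x - c‖ ^ 2) ^ (-(n : ℝ) / 2) := by
    funext x
    show (qfun n α (p.1, x)) ^ (-(n : ℝ) / 2) = _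
    unfold qfun
    rw [hfactor x, norm_smul, mul_pow]
    rw [Real.mul_rpow (by positivity) (by positivity)]
    rw [Real.norm_eq_abs, sq_abs]
  have hxc : p.2 ≠ c := by
    intro hcontra
    apply (ne_of_gt hp.2)
    show qfun n α (p.1, p.2) = 0
    unfold qfun
    rw [show ((p.1, p.2) : ℝ × Pt n).1 = p.1 from rfl, show ((p.1, p.2) : ℝ × Pt n).2 = p.2 from rfl]
    rw [hfactor p.2, hcontra]
    simp
  have hne : (fun x : Pt n => Ffun n α (p.1, x)) = fun x =>
      ((1 - p.1) ^ 2) ^ (-(n : ℝ) / 2) * (fun y => (‖y - c‖ ^ 2) ^ (-(n : ℝ) / 2)) x := hslice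
  rw [hne]
  have hcore_smooth : ∀ y ∈ {y : Pt n | y ≠ c}, ContDiffAt ℝ ∞
      (fun y => (‖y - c‖ ^ 2 : ℝ) ^ (-(n : ℝ) / 2)) y :=
    fun y hy => normsq_rpow_smoothAt c hy _
  rw [lap_const_mul isOpen_ne hcore_smooth hxc]
  rw [lap_normsq_rpow c hxc (-(n : ℝ) / 2) (by ring)]
  ring

lemma Vfun_smoothAt (α : ℝ) (k : ℕ) {x : Pt n} (hx : rP n α x ≠ 0) :
    ContDiffAt ℝ ∞ (Vfun n α k) x :=
  iter_slice_smoothAt (Uset_open α) (Ffun_smooth α) (mem_Uset_zero α hx) k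

lemma Vfun_lap (α : ℝ) (k : ℕ) {x : Pt n} (hx : rP n α x ≠ 0) :
    lap n (Vfun n α k) x = 0 :=
  lap_iter_slice_zero (Uset_open α) (Ffun_smooth α) (Ffun_slice_harmonic α)
    (mem_Uset_zero α hx) k

lemma norm_smul_sq (a : ℝ) (v : Pt n) : ‖a • v‖ ^ 2 = a ^ 2 * ‖v‖ ^ 2 := by
  rw [norm_smul, mul_pow, Real.norm_eq_abs, sq_abs]

/-- Expansion of `q(t,x)` in bispherical data. -/
lemma qfun_expand (α : ℝ) (x : Pt n) (t : ℝ) :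
    qfun n α (t, x) = rP n α x ^ 2
      - t * (rP n α x ^ 2 + rM n α x ^ 2 - 4 * α ^ 2) + t ^ 2 * rM n α x ^ 2 := by
  unfold qfun SD.rP SD.rM
  rw [show ((t, x) : ℝ × Pt n).1 = t from rfl, show ((t, x) : ℝ × Pt n).2 = x from rfl]
  rw [@norm_sub_sq_real _ _ _ ((1 - t) • x) ((α * (1 + t)) • e1 n)]
  rw [@norm_sub_sq_real _ _ _ x (α • e1 n)]
  rw [@norm_add_sq_real _ _ _ x (α • e1 n)]
  rw [norm_smul_sq, norm_smul_sq, norm_smul_sq]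
  rw [real_inner_smul_left, real_inner_smul_right, real_inner_smul_right]
  rw [e1_norm]
  ring

/-- The value formula for `Vfun` in terms of Gegenbauer polynomials. -/
lemma Vfun_eq (α : ℝ) (k : ℕ) {x : Pt n} (hp : 0 < rP n α x) (hm : 0 < rM n α x) :
    Vfun n α k x = ((Nat.factorial k : ℕ) : ℝ) * (rP n α x ^ 2) ^ (-(n : ℝ) / 2)
      * (rM n α x / rP n α x) ^ (k : ℕ) * gegen n k (cosT n α x) := by
  set rp := rP n α x with hrp
  set rm := rM n α x with hrm
  set s := cosT n α x with hs
  set c := rm / rp with hcdef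
  have hq : ∀ t : ℝ, qfun n α (t, x) = rp ^ 2 * (1 - 2 * s * (c * t) + (c * t) ^ 2) := by
    intro t
    rw [qfun_expand α x t]
    rw [hs]
    unfold SD.cosT
    rw [← hrp, ← hrm, hcdef]
    field_simp
  set T : Set ℝ := {t | 0 < 1 - 2 * s * (c * t) + (c * t) ^ 2} with hT
  have hTopen : IsOpen T := by
    apply isOpen_lt continuous_const
    continuity
  have hT0 : (0 : ℝ) ∈ T := by
    show (0:ℝ) < 1 - 2 * s * (c * 0) + (c * 0) ^ 2
    norm_num
  set O : Set ℝ := {u | 0 < 1 - 2 * s * u + u ^ 2} with hO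
  have hOopen : IsOpen O := by
    apply isOpen_lt continuous_const
    continuity
  set gs : ℝ → ℝ := fun u => (1 - 2 * s * u + u ^ 2) ^ (-(n : ℝ) / 2) with hgs
  have hgs_smooth : ∀ u ∈ O, ContDiffAt ℝ ∞ gs u := by
    intro u hu
    have hpoly : ContDiffAt ℝ ∞ (fun u : ℝ => 1 - 2 * s * u + u ^ 2) u :=
      ((contDiff_const.sub (contDiff_const.mul contDiff_id)).add
        (contDiff_id.pow 2)).contDiffAt
    exact hpoly.rpow_const_of_ne (ne_of_gt hu)
  have hgc_smooth : ∀ t ∈ T, ContDiffAt ℝ ∞ (fun w => gs (c * w)) t := by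
    intro t ht
    have h2 : ContDiffAt ℝ ∞ (fun w : ℝ => c * w) t := contDiffAt_const.mul contDiffAt_id
    exact ContDiffAt.comp t (hgs_smooth (c * t) ht) h2
  have hev : (fun t => Ffun n α (t, x)) =ᶠ[𝓝 (0 : ℝ)]
      (fun t => (rp ^ 2) ^ (-(n : ℝ) / 2) * gs (c * t)) := by
    filter_upwards [hTopen.mem_nhds hT0] with t ht
    show (qfun n α (t, x)) ^ (-(n : ℝ) / 2) = _
    rw [hq t]
    rw [Real.mul_rpow (by positivity) (le_of_lt ht)]
  show iteratedDeriv k (fun t => Ffun n α (t, x)) 0 = _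
  rw [hev.iteratedDeriv_eq k]
  rw [iteratedDeriv_const_mul'' hTopen hgc_smooth _ k 0 hT0]
  have h0O : c * 0 ∈ O := by
    show (0:ℝ) < 1 - 2 * s * (c * 0) + (c * 0) ^ 2
    norm_num
  rw [iteratedDeriv_comp_const_mul' hOopen hgs_smooth c k 0 h0O]
  rw [mul_zero]
  have hgt := gegen_taylor n s k
  rw [hgs]
  rw [hgt]
  ring

lemma rP_neg (α : ℝ) (x : Pt n) : rP n (-α) x = rM n α x := by
  unfold SD.rP SD.rM
  rw [neg_smul, sub_neg_eq_add]

lemma rM_neg (α : ℝ) (x : Pt n) : rM n (-α) x = rP n α x := by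
  unfold SD.rP SD.rM
  rw [neg_smul, ← sub_eq_add_neg]

lemma cosT_neg (α : ℝ) (x : Pt n) : cosT n (-α) x = cosT n α x := by
  unfold SD.cosT
  rw [rP_neg, rM_neg]
  ring

end Bisph

section UBaseEq
variable {n : ℕ}

lemma pos_rpow_eq {y : ℝ} (hy : 0 < y) (z : ℝ) : y ^ z = Real.exp (z * Real.log y) := by
  rw [Real.rpow_def_of_pos hy, mul_comm]

lemma uBase_eq (ξ₁ α : ℝ) (hα : α ≠ 0) (k : ℕ) {x : Pt n}
    (hp : 0 < rP n α x) (hm : 0 < rM n α x) :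
    uBase n ξ₁ α k x
      = ((2 * α ^ 2) ^ ((n : ℝ) / 2) * Real.exp (((k : ℝ) + (n : ℝ) / 2) * (2 * ξ₁))
          / ((Nat.factorial k : ℕ) : ℝ)) * Vfun n (-α) k x
        + (-((2 * α ^ 2) ^ ((n : ℝ) / 2)) / ((Nat.factorial k : ℕ) : ℝ)) * Vfun n α k x := by
  have hmn : 0 < rP n (-α) x := by rw [rP_neg]; exact hm
  have hpn : 0 < rM n (-α) x := by rw [rM_neg]; exact hp
  rw [Vfun_eq α k hp hm, Vfun_eq (-α) k hmn hpn, rP_neg, rM_neg, cosT_neg]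
  set rp := rP n α x with hrp
  set rm := rM n α x with hrm
  have h2α : (0:ℝ) < 2 * α ^ 2 := by positivity
  have hdiv : (0:ℝ) < rm / rp := div_pos hm hp
  have hdiv' : (0:ℝ) < rp / rm := div_pos hp hm
  set a : ℝ := (k : ℝ) + (n : ℝ) / 2 with ha
  -- identities
  have hL : Real.cosh (xiC n α x) - cosT n α x = 2 * α ^ 2 / (rp * rm) := by
    unfold SD.xiC SD.cosT
    rw [← hrp, ← hrm]
    rw [Real.cosh_eq, Real.exp_log hdiv, Real.exp_neg, Real.exp_log hdiv]
    rw [inv_div]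
    field_simp
    ring
  have hE1 : Real.exp (a * (2 * ξ₁ - xiC n α x))
      = Real.exp (a * (2 * ξ₁)) * (rm / rp) ^ (-a) := by
    unfold SD.xiC
    rw [← hrp, ← hrm]
    rw [pos_rpow_eq hdiv, ← Real.exp_add]
    congr 1
    ring
  have hE2 : Real.exp (a * xiC n α x) = (rm / rp) ^ a := by
    unfold SD.xiC
    rw [← hrp, ← hrm, pos_rpow_eq hdiv]
  have hC1 : (2 * α ^ 2 / (rp * rm)) ^ ((n : ℝ) / 2) * (rm / rp) ^ (-a)
      = (2 * α ^ 2) ^ ((n : ℝ) / 2) * (rm ^ 2) ^ (-(n : ℝ) / 2) * (rp / rm) ^ (k : ℕ) := by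
    rw [← Real.rpow_natCast (rp / rm) k]
    rw [pos_rpow_eq (div_pos h2α (by positivity)), pos_rpow_eq hdiv,
      pos_rpow_eq h2α, pos_rpow_eq (by positivity : (0:ℝ) < rm ^ 2), pos_rpow_eq hdiv']
    simp only [← Real.exp_add]
    congr 1
    rw [Real.log_div (ne_of_gt h2α) (by positivity), Real.log_div (ne_of_gt hm) (ne_of_gt hp),
      Real.log_div (ne_of_gt hp) (ne_of_gt hm), Real.log_mul (ne_of_gt hp) (ne_of_gt hm),
      Real.log_pow]
    push_cast
    ring
  have hC2 : (2 * α ^ 2 / (rp * rm)) ^ ((n : ℝ) / 2) * (rm / rp) ^ a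
      = (2 * α ^ 2) ^ ((n : ℝ) / 2) * (rp ^ 2) ^ (-(n : ℝ) / 2) * (rm / rp) ^ (k : ℕ) := by
    rw [← Real.rpow_natCast (rm / rp) k]
    rw [pos_rpow_eq (div_pos h2α (by positivity)), pos_rpow_eq hdiv,
      pos_rpow_eq h2α, pos_rpow_eq (by positivity : (0:ℝ) < rp ^ 2), pos_rpow_eq hdiv]
    simp only [← Real.exp_add]
    congr 1
    rw [Real.log_div (ne_of_gt h2α) (by positivity), Real.log_div (ne_of_gt hm) (ne_of_gt hp),
      Real.log_mul (ne_of_gt hp) (ne_of_gt hm), Real.log_pow]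
    push_cast
    ring
  have hk : ((Nat.factorial k : ℕ) : ℝ) ≠ 0 := by
    exact_mod_cast Nat.factorial_ne_zero k
  unfold SD.uBase
  rw [show (((k : ℝ) + (n : ℝ) / 2)) = a from rfl]
  rw [hL, hE1, hE2]
  set G := gegen n k (cosT n α x) with hG
  set E := Real.exp (a * (2 * ξ₁)) with hE
  set fk : ℝ := ((Nat.factorial k : ℕ) : ℝ) with hfk
  have hR : ((2 * α ^ 2) ^ ((n : ℝ) / 2) * E / fk)
        * (fk * (rm ^ 2) ^ (-(n : ℝ) / 2) * (rp / rm) ^ (k : ℕ) * G)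
      + (-((2 * α ^ 2) ^ ((n : ℝ) / 2)) / fk)
        * (fk * (rp ^ 2) ^ (-(n : ℝ) / 2) * (rm / rp) ^ (k : ℕ) * G)
      = (2 * α ^ 2) ^ ((n : ℝ) / 2) * E
          * ((rm ^ 2) ^ (-(n : ℝ) / 2) * (rp / rm) ^ (k : ℕ)) * G
        - (2 * α ^ 2) ^ ((n : ℝ) / 2)
          * ((rp ^ 2) ^ (-(n : ℝ) / 2) * (rm / rp) ^ (k : ℕ)) * G := by
    field_simp
    ring
  rw [hR]
  linear_combination (E * G) * hC1 - G * hC2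

end UBaseEq

section Geom
variable {n : ℕ}

lemma focus_mem_ball (α ξ : ℝ) (hα : 0 < α) (hξ : 0 < ξ) : α • e1 n ∈ ballB n α ξ := by
  unfold SD.ballB SD.ctr SD.rad
  rw [Metric.mem_ball, dist_eq_norm]
  have hs : 0 < Real.sinh ξ := Real.sinh_pos_iff.mpr hξ
  have h1 : α • e1 n - (α * Real.cosh ξ / Real.sinh ξ) • e1 n
      = (α - α * Real.cosh ξ / Real.sinh ξ) • e1 n := by rw [← sub_smul]
  rw [h1, norm_smul, e1_norm, mul_one, Real.norm_eq_abs]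
  have hval : α - α * Real.cosh ξ / Real.sinh ξ
      = -(α * Real.exp (-ξ) / Real.sinh ξ) := by
    field_simp
    rw [← Real.cosh_sub_sinh ξ]
    ring
  rw [hval, abs_neg, abs_of_pos (by positivity)]
  have hlt : Real.exp (-ξ) < 1 := by
    rw [← Real.exp_zero]
    exact Real.exp_lt_exp.mpr (by linarith)
  rw [div_lt_div_iff_of_pos_right hs]
  exact mul_lt_of_lt_one_right hα hlt

lemma negfocus_not_mem (α ξ : ℝ) (hα : 0 < α) (hξ : 0 < ξ) :
    (-α) • e1 n ∉ ballB n α ξ := by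
  unfold SD.ballB SD.ctr SD.rad
  rw [Metric.mem_ball, dist_eq_norm]
  have hs : 0 < Real.sinh ξ := Real.sinh_pos_iff.mpr hξ
  have h1 : (-α) • e1 n - (α * Real.cosh ξ / Real.sinh ξ) • e1 n
      = (-α - α * Real.cosh ξ / Real.sinh ξ) • e1 n := by rw [← sub_smul]
  rw [h1, norm_smul, e1_norm, mul_one, Real.norm_eq_abs]
  have hc1 : (1:ℝ) ≤ Real.cosh ξ := Real.one_le_cosh ξ
  have hval : -α - α * Real.cosh ξ / Real.sinh ξ
      = -((α * Real.sinh ξ + α * Real.cosh ξ) / Real.sinh ξ) := by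
    field_simp
    ring
  rw [hval, abs_neg, abs_of_pos (by positivity)]
  intro hcon
  rw [div_lt_div_iff_of_pos_right hs] at hcon
  nlinarith [hα, hs, hc1]

lemma shell_pos (ξ₁ ξ₂ α : ℝ) (hξ : ξ₂ < ξ₁) (hξ₂ : 0 < ξ₂) (hα : 0 < α) {x : Pt n}
    (hx : x ∈ shell n ξ₁ ξ₂ α) : 0 < rP n α x ∧ 0 < rM n α x := by
  have hξ₁ : 0 < ξ₁ := lt_trans hξ₂ hξ
  constructor
  · have hmem : α • e1 n ∈ closure (ballB n α ξ₁) :=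
      subset_closure (focus_mem_ball α ξ₁ hα hξ₁)
    have hne : x ≠ α • e1 n := by
      intro h
      exact hx.2 (h ▸ hmem)
    unfold SD.rP
    rw [norm_pos_iff]
    exact sub_ne_zero.2 hne
  · have hnot : (-α) • e1 n ∉ ballB n α ξ₂ := negfocus_not_mem α ξ₂ hα hξ₂
    have hne : x ≠ (-α) • e1 n := by
      intro h
      exact hnot (h ▸ hx.1)
    unfold SD.rM
    rw [norm_pos_iff]
    intro hzero
    apply hne
    have h2 : x = -(α • e1 n) := eq_neg_of_add_eq_zero_left hzero
    rw [h2, ← neg_smul]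

lemma sphere_facts (ξ₁ α : ℝ) (hα : 0 < α) (hξ : 0 < ξ₁) {x : Pt n}
    (hx : x ∈ gammaD n α ξ₁) : xiC n α x = ξ₁ := by
  have hs : 0 < Real.sinh ξ₁ := Real.sinh_pos_iff.mpr hξ
  have hrad : rad α ξ₁ ≠ 0 := by
    unfold SD.rad
    positivity
  have hsph : x ∈ Metric.sphere (ctr n α ξ₁) (rad α ξ₁) := by
    have h := hx
    unfold SD.gammaD SD.ballB at h
    rwa [frontier_ball _ hrad] at h
  rw [mem_sphere_iff_norm] at hsph
  set c := Real.cosh ξ₁ with hcdef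
  set s := Real.sinh ξ₁ with hsdef
  have hc2 : c ^ 2 - s ^ 2 = 1 := Real.cosh_sq_sub_sinh_sq ξ₁
  set I := ⟪x, e1 n⟫ with hI
  set R : ℝ := α / s with hR
  have hα' : α = R * s := by
    rw [hR, div_mul_cancel₀ _ (ne_of_gt hs)]
  have hRpos : 0 < R := by rw [hR]; positivity
  -- squared sphere equation
  have hsq2 : ‖x‖ ^ 2 - 2 * (R * c) * I + (R * c) ^ 2 = R ^ 2 := by
    have h2 : ‖x - ctr n α ξ₁‖ ^ 2 = (rad α ξ₁) ^ 2 := by rw [hsph]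
    unfold SD.ctr SD.rad at h2
    rw [@norm_sub_sq_real _ _ _ x ((α * c / s) • e1 n)] at h2
    rw [real_inner_smul_right, norm_smul_sq, e1_norm, ← hI] at h2
    have hco : α * c / s = R * c := by rw [hR]; ring
    have hco2 : α / s = R := by rw [hR]
    rw [hco, hco2] at h2
    calc ‖x‖ ^ 2 - 2 * (R * c) * I + (R * c) ^ 2
        = ‖x‖ ^ 2 - 2 * (R * c * I) + (R * c) ^ 2 * 1 ^ 2 := by ring
      _ = R ^ 2 := h2
  -- rP positive
  have hrPpos : 0 < rP n α x := by
    have htri := dist_triangle x (α • e1 n) (ctr n α ξ₁)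
    have hd1 : dist x (ctr n α ξ₁) = α / s := by
      rw [dist_eq_norm, hsph]; rfl
    have hd2 : dist (α • e1 n) (ctr n α ξ₁) = α * Real.exp (-ξ₁) / s := by
      rw [dist_eq_norm]
      have h1 : α • e1 n - (α * c / s) • e1 n = (α - α * c / s) • e1 n := by
        rw [← sub_smul]
      show ‖α • e1 n - (α * c / s) • e1 n‖ = _
      rw [h1, norm_smul, e1_norm, mul_one, Real.norm_eq_abs]
      have hval : α - α * c / s = -(α * Real.exp (-ξ₁) / s) := by
        field_simp
        rw [← Real.cosh_sub_sinh ξ₁, ← hcdef, ← hsdef]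
        ring
      rw [hval, abs_neg, abs_of_pos (by positivity)]
    have hlt : Real.exp (-ξ₁) < 1 := by
      rw [← Real.exp_zero]
      exact Real.exp_lt_exp.mpr (by linarith)
    have hdP : rP n α x = dist x (α • e1 n) := by
      unfold SD.rP
      rw [dist_eq_norm]
    rw [hdP]
    have hge : α / s - α * Real.exp (-ξ₁) / s ≤ dist x (α • e1 n) := by
      rw [← hd1, ← hd2]
      linarith [htri]
    have hgap : 0 < α / s - α * Real.exp (-ξ₁) / s := by
      rw [div_sub_div_same]
      apply div_pos _ hs
      nlinarith [hα, hlt]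
    linarith
  -- rM relation
  have hM : rM n α x ^ 2 = ‖x‖ ^ 2 + 2 * α * I + α ^ 2 := by
    unfold SD.rM
    rw [@norm_add_sq_real _ _ _ x (α • e1 n), real_inner_smul_right, norm_smul_sq, e1_norm, ← hI]
    ring
  have hP : rP n α x ^ 2 = ‖x‖ ^ 2 - 2 * α * I + α ^ 2 := by
    unfold SD.rP
    rw [@norm_sub_sq_real _ _ _ x (α • e1 n), real_inner_smul_right, norm_smul_sq, e1_norm, ← hI]
    ring
  have hexp : Real.exp ξ₁ = c + s := (Real.cosh_add_sinh ξ₁).symm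
  have hkey : rM n α x ^ 2 = (Real.exp ξ₁ * rP n α x) ^ 2 := by
    rw [mul_pow, hM, hP, hexp, hα']
    linear_combination (1 - (c + s) ^ 2) * hsq2
      + (-(2 * R * I * (c + s)) - R ^ 2 * (1 - (c + s) ^ 2)) * hc2
  have hMnn : 0 ≤ rM n α x := norm_nonneg _
  have hMP : rM n α x = Real.exp ξ₁ * rP n α x := by
    have h1 : rM n α x = Real.sqrt (rM n α x ^ 2) := (Real.sqrt_sq hMnn).symm
    rw [h1, hkey]
    exact Real.sqrt_sq (by positivity)
  unfold SD.xiC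
  rw [hMP, mul_div_assoc, div_self (ne_of_gt hrPpos), mul_one, Real.log_exp]

lemma uBase_dirichlet (ξ₁ α : ℝ) (hα : 0 < α) (hξ : 0 < ξ₁) (k : ℕ) {x : Pt n}
    (hx : x ∈ gammaD n α ξ₁) : uBase n ξ₁ α k x = 0 := by
  have hxi := sphere_facts ξ₁ α hα hξ hx
  unfold SD.uBase
  rw [hxi]
  rw [show 2 * ξ₁ - ξ₁ = ξ₁ by ring]
  ring

end Geom
end SDAux

open SD in
/-- The basis functions `u_k` are harmonic in `Ω` and vanish identically on `Γ_D`. -/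
theorem uBase_harmonic_and_dirichlet
    (n : ℕ) (hn : 1 ≤ n) (ξ₁ ξ₂ α : ℝ) (hξ : ξ₂ < ξ₁) (hξ₂ : 0 < ξ₂) (hα : 0 < α) :
    ∀ k : ℕ,
      ContDiffOn ℝ 2 (uBase n ξ₁ α k) (shell n ξ₁ ξ₂ α) ∧
      (∀ x ∈ shell n ξ₁ ξ₂ α, lap n (uBase n ξ₁ α k) x = 0) ∧
      (∀ x ∈ gammaD n α ξ₁, uBase n ξ₁ α k x = 0) := by
  intro k
  have hξ₁ : 0 < ξ₁ := lt_trans hξ₂ hξ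
  have hrPc : Continuous fun x : Pt n => rP n α x := by
    unfold SD.rP
    exact (continuous_id.sub continuous_const).norm
  have hrMc : Continuous fun x : Pt n => rM n α x := by
    unfold SD.rM
    exact (continuous_id.add continuous_const).norm
  have hWopen : IsOpen {x : Pt n | 0 < rP n α x ∧ 0 < rM n α x} :=
    IsOpen.and (isOpen_lt continuous_const hrPc) (isOpen_lt continuous_const hrMc)
  have hsub : shell n ξ₁ ξ₂ α ⊆ {x : Pt n | 0 < rP n α x ∧ 0 < rM n α x} :=
    fun x hx => SDAux.shell_pos ξ₁ ξ₂ α hξ hξ₂ hα hx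
  set a1 : ℝ := (2 * α ^ 2) ^ ((n : ℝ) / 2)
      * Real.exp (((k : ℝ) + (n : ℝ) / 2) * (2 * ξ₁)) / ((Nat.factorial k : ℕ) : ℝ) with ha1
  set a2 : ℝ := -((2 * α ^ 2) ^ ((n : ℝ) / 2)) / ((Nat.factorial k : ℕ) : ℝ) with ha2
  have hVm : ∀ y ∈ {x : Pt n | 0 < rP n α x ∧ 0 < rM n α x},
      ContDiffAt ℝ ((⊤ : ℕ∞) : WithTop ℕ∞) (SDAux.Vfun n (-α) k) y := by
    intro y hy
    refine SDAux.Vfun_smoothAt (-α) k ?_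
    rw [SDAux.rP_neg]
    exact ne_of_gt hy.2
  have hVp : ∀ y ∈ {x : Pt n | 0 < rP n α x ∧ 0 < rM n α x},
      ContDiffAt ℝ ((⊤ : ℕ∞) : WithTop ℕ∞) (SDAux.Vfun n α k) y := by
    intro y hy
    exact SDAux.Vfun_smoothAt α k (ne_of_gt hy.1)
  have hev : ∀ y ∈ {x : Pt n | 0 < rP n α x ∧ 0 < rM n α x},
      uBase n ξ₁ α k =ᶠ[nhds y]
        (fun z => a1 * SDAux.Vfun n (-α) k z + a2 * SDAux.Vfun n α k z) := by
    intro y hy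
    filter_upwards [hWopen.mem_nhds hy] with z hz
    rw [SDAux.uBase_eq ξ₁ α (ne_of_gt hα) k hz.1 hz.2]
  refine ⟨?_, ?_, ?_⟩
  · intro y hy
    have hyW := hsub hy
    have h1 : ContDiffAt ℝ ((⊤ : ℕ∞) : WithTop ℕ∞)
        (fun z => a1 * SDAux.Vfun n (-α) k z + a2 * SDAux.Vfun n α k z) y :=
      (contDiffAt_const.mul (hVm y hyW)).add (contDiffAt_const.mul (hVp y hyW))
    exact ((h1.congr_of_eventuallyEq (hev y hyW)).of_le SDAux.two_le_infty).contDiffWithinAt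
  · intro x hx
    have hxW := hsub hx
    rw [SDAux.lap_congr (hev x hxW)]
    rw [SDAux.lap_combo hWopen hVm hVp hxW a1 a2]
    have hm' : rP n (-α) x ≠ 0 := by
      rw [SDAux.rP_neg]
      exact ne_of_gt hxW.2
    rw [SDAux.Vfun_lap (-α) k hm', SDAux.Vfun_lap α k (ne_of_gt hxW.1)]
    ring
  · intro x hx
    exact SDAux.uBase_dirichlet ξ₁ α hα hξ₁ k hx
end
end
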